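/- arXiv:1606.03106 — 4 statements merged into one kernel-verified Lean document; each statement's English description precedes it below -/
import Mathlib

section
/- Let Γ ⊆ ℝ×ℝ be a left-monotone set. Then for all s, t ∈ ℝ, the set Γ is c_{s,t}-finitely optimal, where c_{s,t}(x,y) = 1_{(−∞,s]}(x)·|y−t|. That is, whenever α is a finite measure concentrated on finitely many points of Γ and α' is a competitor of α, then ∫ c_{s,t} dα ≤ ∫ c_{s,t} dα'. -/
open MeasureTheory Set ENNReal

noncomputable section

/-- `π` is a transport plan between `μ` and `ν`: a probability measure on `ℝ × ℝ`
whose first marginal is `μ` and whose second marginal is `ν`. -/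
def IsTransport (μ ν : Measure ℝ) (π : Measure (ℝ × ℝ)) : Prop :=
  IsProbabilityMeasure π ∧ π.map Prod.fst = μ ∧ π.map Prod.snd = ν

/-- `π` is a martingale transport plan between `μ` and `ν`:
`∫ ρ(x)(y − x) dπ(x,y) = 0` for every bounded continuous `ρ : ℝ → ℝ`. -/
def IsMartingaleTransport (μ ν : Measure ℝ) (π : Measure (ℝ × ℝ)) : Prop :=
  IsTransport μ ν π ∧
    ∀ ρ : ℝ → ℝ, Continuous ρ → (∃ M : ℝ, ∀ x, |ρ x| ≤ M) →
      ∫ p : ℝ × ℝ, ρ p.1 * (p.2 - p.1) ∂π = 0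

/-- Convex order `μ ≤_cx ν`: `∫ f dμ ≤ ∫ f dν` for every convex `f : ℝ → ℝ`
for which both integrals exist. -/
def ConvexOrder (μ ν : Measure ℝ) : Prop :=
  ∀ f : ℝ → ℝ, ConvexOn ℝ Set.univ f → Integrable f μ → Integrable f ν →
    ∫ x, f x ∂μ ≤ ∫ x, f x ∂ν

/-- `α'` is a competitor of `α`: a finite measure with the same two marginals as `α`
such that for every `x`, `α ({x} × ℝ) = α' ({x} × ℝ)` and
`∫_{{x} × ℝ} y dα = ∫_{{x} × ℝ} y dα'`. -/
def IsCompetitor (α α' : Measure (ℝ × ℝ)) : Prop :=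
  IsFiniteMeasure α' ∧
    α'.map Prod.fst = α.map Prod.fst ∧ α'.map Prod.snd = α.map Prod.snd ∧
    ∀ x : ℝ,
      α ({x} ×ˢ (Set.univ : Set ℝ)) = α' ({x} ×ˢ (Set.univ : Set ℝ)) ∧
      ∫ p in ({x} ×ˢ (Set.univ : Set ℝ)), p.2 ∂α =
        ∫ p in ({x} ×ˢ (Set.univ : Set ℝ)), p.2 ∂α'

/-- `Γ` is `c`-finitely optimal: every finite measure concentrated on finitely many
points of `Γ` is cost-minimizing among its competitors. -/
def FinitelyOptimal (c : ℝ × ℝ → ℝ) (Γ : Set (ℝ × ℝ)) : Prop :=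
  ∀ α : Measure (ℝ × ℝ), IsFiniteMeasure α →
    (∃ S : Finset (ℝ × ℝ), ↑S ⊆ Γ ∧ α ((↑S : Set (ℝ × ℝ))ᶜ) = 0) →
    ∀ α' : Measure (ℝ × ℝ), IsCompetitor α α' →
      ∫⁻ p, ENNReal.ofReal (c p) ∂α ≤ ∫⁻ p, ENNReal.ofReal (c p) ∂α'

/-- `Γ ⊆ ℝ × ℝ` is left-monotone. -/
def LeftMonotone (Γ : Set (ℝ × ℝ)) : Prop :=
  ∀ ⦃x y₁ y₂ x' y' : ℝ⦄, (x, y₁) ∈ Γ → (x, y₂) ∈ Γ → (x', y') ∈ Γ →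
    x < x' → y₁ < y₂ → y' ≤ y₁ ∨ y₂ ≤ y'

/-- The cost function `c_{s,t}(x,y) = 1_{(−∞,s]}(x) · |y − t|`. -/
def cst (s t : ℝ) (p : ℝ × ℝ) : ℝ :=
  (Set.Iic s).indicator (fun _ => (1 : ℝ)) p.1 * |p.2 - t|

lemma cst_of_le {s t x y : ℝ} (h : x ≤ s) : cst s t (x, y) = |y - t| := by
  simp [cst, Set.indicator_of_mem, Set.mem_Iic, h]

lemma cst_of_gt {s t x y : ℝ} (h : s < x) : cst s t (x, y) = 0 := by
  simp [cst, Set.indicator_of_notMem, Set.mem_Iic, not_le.2 h]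

lemma cst_nonneg (s t : ℝ) (p : ℝ × ℝ) : 0 ≤ cst s t p := by
  rcases le_or_gt p.1 s with h | h
  · have : cst s t (p.1, p.2) = |p.2 - t| := cst_of_le h
    simp only [Prod.mk.eta] at this
    rw [this]; positivity
  · have : cst s t (p.1, p.2) = 0 := cst_of_gt h
    simp only [Prod.mk.eta] at this
    rw [this]

lemma measurable_of_finsupp (X : Finset ℝ) (f : ℝ → ℝ) (h : ∀ x ∉ X, f x = 0) :
    Measurable f := by
  classical
  have hf : f = fun x => ∑ x₀ ∈ X, ({x₀} : Set ℝ).indicator (fun _ => f x₀) x := by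
    funext x
    by_cases hx : x ∈ X
    · rw [Finset.sum_eq_single_of_mem x hx]
      · simp
      · intro b _ hbx
        apply Set.indicator_of_notMem
        simp only [Set.mem_singleton_iff]
        exact fun h' => hbx h'.symm
    · rw [h x hx]
      symm
      apply Finset.sum_eq_zero
      intro b hb
      apply Set.indicator_of_notMem
      simp only [Set.mem_singleton_iff]
      rintro rfl; exact hx hb
  rw [hf]
  exact Finset.measurable_sum _ fun i _ => measurable_const.indicator (measurableSet_singleton _)

namespace LMdual

variable (S : Finset (ℝ × ℝ)) (s t : ℝ)

/-- `x` is a straddling column. -/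
def E (x : ℝ) : Prop := ∃ y₁ y₂ : ℝ, (x, y₁) ∈ S ∧ (x, y₂) ∈ S ∧ y₁ < t ∧ t < y₂

open Classical in
/-- `y`-values appearing in straddling columns with `x ≤ s`. -/
def YS : Finset ℝ := (S.filter (fun r => r.1 ≤ s ∧ E S t r.1)).image Prod.snd

open Classical in
def p : ℝ := if h : (YS S s t).Nonempty then (YS S s t).min' h else t

open Classical in
def q : ℝ := if h : (YS S s t).Nonempty then (YS S s t).max' h else t

def lam : ℝ := (p S s t + q S s t - 2*t) / (q S s t - p S s t)

def chord (y : ℝ) : ℝ := (t - p S s t) + lam S s t * (y - p S s t)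

def psi (y : ℝ) : ℝ := |y - t| - max (|y - t|) (chord S s t y)

open Classical in
def coef (x : ℝ) : ℝ × ℝ :=
  if x ∈ S.image Prod.fst then
    (if s < x then (0, 0)
     else if E S t x then ((t - p S s t) - lam S s t * p S s t, lam S s t)
     else if ∀ y, (x, y) ∈ S → y ≤ t then
       (if ∀ y, (x, y) ∈ S → y ≤ p S s t then (t, -1)
        else ((t - p S s t) - lam S s t * p S s t, lam S s t))
     else
       (if ∀ y, (x, y) ∈ S → q S s t ≤ y then (-t, 1)
        else ((t - p S s t) - lam S s t * p S s t, lam S s t)))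
  else (0, 0)

lemma pmem (h : (YS S s t).Nonempty) :
    ∃ xj, (xj, p S s t) ∈ S ∧ xj ≤ s ∧ E S t xj := by
  classical
  have hp : p S s t ∈ YS S s t := by
    rw [p, dif_pos h]; exact (YS S s t).min'_mem h
  rw [YS, Finset.mem_image] at hp
  obtain ⟨r, hr, hr2⟩ := hp
  rw [Finset.mem_filter] at hr
  exact ⟨r.1, by rw [← hr2]; exact hr.1, hr.2.1, hr.2.2⟩

lemma qmem (h : (YS S s t).Nonempty) :
    ∃ xm, (xm, q S s t) ∈ S ∧ xm ≤ s ∧ E S t xm := by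
  classical
  have hp : q S s t ∈ YS S s t := by
    rw [q, dif_pos h]; exact (YS S s t).max'_mem h
  rw [YS, Finset.mem_image] at hp
  obtain ⟨r, hr, hr2⟩ := hp
  rw [Finset.mem_filter] at hr
  exact ⟨r.1, by rw [← hr2]; exact hr.1, hr.2.1, hr.2.2⟩

lemma mem_YS {x y : ℝ} (hr : (x, y) ∈ S) (hxs : x ≤ s) (hEx : E S t x) :
    y ∈ YS S s t := by
  classical
  rw [YS, Finset.mem_image]
  exact ⟨(x, y), Finset.mem_filter.2 ⟨hr, hxs, hEx⟩, rfl⟩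

lemma p_le_q : p S s t ≤ q S s t := by
  classical
  by_cases h : (YS S s t).Nonempty
  · rw [p, q, dif_pos h, dif_pos h]
    exact Finset.min'_le _ _ ((YS S s t).max'_mem h)
  · rw [p, q, dif_neg h, dif_neg h]

lemma bounds_of_mem {x y : ℝ} (hr : (x, y) ∈ S) (hxs : x ≤ s) (hEx : E S t x) :
    p S s t ≤ y ∧ y ≤ q S s t := by
  classical
  have hy := mem_YS S s t hr hxs hEx
  have hne : (YS S s t).Nonempty := ⟨y, hy⟩
  constructor
  · rw [p, dif_pos hne]; exact Finset.min'_le _ _ hy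
  · rw [q, dif_pos hne]; exact Finset.le_max' _ _ hy

lemma p_lt_t (h : (YS S s t).Nonempty) : p S s t < t := by
  classical
  obtain ⟨xj, hj, hjs, y₁, y₂, h1, h2, h1t, h2t⟩ := pmem S s t h
  have hy1 : y₁ ∈ YS S s t := mem_YS S s t h1 hjs ⟨y₁, y₂, h1, h2, h1t, h2t⟩
  have : p S s t ≤ y₁ := by rw [p, dif_pos h]; exact Finset.min'_le _ _ hy1
  linarith

lemma t_lt_q (h : (YS S s t).Nonempty) : t < q S s t := by
  classical
  obtain ⟨xm, hm, hms, y₁, y₂, h1, h2, h1t, h2t⟩ := qmem S s t h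
  have hy2 : y₂ ∈ YS S s t := mem_YS S s t h2 hms ⟨y₁, y₂, h1, h2, h1t, h2t⟩
  have : y₂ ≤ q S s t := by rw [q, dif_pos h]; exact Finset.le_max' _ _ hy2
  linarith

lemma p_eq_t (h : ¬ (YS S s t).Nonempty) : p S s t = t := by
  classical
  rw [p, dif_neg h]

lemma q_eq_t (h : ¬ (YS S s t).Nonempty) : q S s t = t := by
  classical
  rw [q, dif_neg h]

lemma p_le_t : p S s t ≤ t := by
  by_cases h : (YS S s t).Nonempty
  · exact (p_lt_t S s t h).le
  · exact (p_eq_t S s t h).le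

lemma t_le_q : t ≤ q S s t := by
  by_cases h : (YS S s t).Nonempty
  · exact (t_lt_q S s t h).le
  · exact (q_eq_t S s t h).ge

lemma lam_ge : -1 ≤ lam S s t := by
  by_cases h : (YS S s t).Nonempty
  · have h1 := p_lt_t S s t h
    have h2 := t_lt_q S s t h
    rw [lam, le_div_iff₀ (by linarith)]
    linarith
  · rw [lam, p_eq_t S s t h, q_eq_t S s t h]
    norm_num

lemma lam_le : lam S s t ≤ 1 := by
  by_cases h : (YS S s t).Nonempty
  · have h1 := p_lt_t S s t h
    have h2 := t_lt_q S s t h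
    rw [lam, div_le_one (by linarith)]
    linarith
  · rw [lam, p_eq_t S s t h, q_eq_t S s t h]
    norm_num

lemma chordq : chord S s t (q S s t) = q S s t - t := by
  by_cases h : (YS S s t).Nonempty
  · have h1 := p_lt_t S s t h
    have h2 := t_lt_q S s t h
    have hmul : lam S s t * (q S s t - p S s t) = p S s t + q S s t - 2*t := by
      rw [lam, div_mul_cancel₀]
      linarith
    rw [chord, hmul]
    ring
  · rw [chord, p_eq_t S s t h, q_eq_t S s t h]
    ring

lemma Fle {y : ℝ} (hy : y ≤ p S s t) : chord S s t y ≤ t - y := by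
  have h := lam_ge S s t
  rw [chord]
  nlinarith [mul_nonneg (sub_nonneg.2 hy) (by linarith : (0:ℝ) ≤ 1 + lam S s t)]

lemma Fge {y : ℝ} (hy : q S s t ≤ y) : chord S s t y ≤ y - t := by
  have h := lam_le S s t
  have hc := chordq S s t
  rw [chord] at hc ⊢
  nlinarith [mul_nonneg (sub_nonneg.2 hy) (by linarith : (0:ℝ) ≤ 1 - lam S s t)]

lemma Fmid1 {y : ℝ} (hy : p S s t ≤ y) : t - y ≤ chord S s t y := by
  have h := lam_ge S s t
  rw [chord]
  nlinarith [mul_nonneg (sub_nonneg.2 hy) (by linarith : (0:ℝ) ≤ 1 + lam S s t)]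

lemma Fmid2 {y : ℝ} (hy : y ≤ q S s t) : y - t ≤ chord S s t y := by
  have h := lam_le S s t
  have hc := chordq S s t
  rw [chord] at hc ⊢
  nlinarith [mul_nonneg (sub_nonneg.2 hy) (by linarith : (0:ℝ) ≤ 1 - lam S s t)]

lemma Fmid {y : ℝ} (h1 : p S s t ≤ y) (h2 : y ≤ q S s t) : |y - t| ≤ chord S s t y := by
  rw [abs_le]
  constructor
  · have := Fmid1 S s t h1; linarith
  · exact Fmid2 S s t h2

lemma psi_nonpos (y : ℝ) : psi S s t y ≤ 0 := by
  rw [psi]; have := le_max_left (|y - t|) (chord S s t y); linarith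

lemma psi_eq_zero {y : ℝ} (h : chord S s t y ≤ |y - t|) : psi S s t y = 0 := by
  rw [psi, max_eq_left h]; ring

lemma psi_chord {y : ℝ} (h : |y - t| ≤ chord S s t y) :
    chord S s t y + psi S s t y = |y - t| := by
  rw [psi, max_eq_right h]; ring

end LMdual

namespace LMdual

variable (S : Finset (ℝ × ℝ)) (s t : ℝ)

lemma coef_support {x : ℝ} (h : x ∉ S.image Prod.fst) : coef S s t x = (0, 0) := by
  classical
  rw [coef, if_neg h]

lemma sub_le_abs (u v : ℝ) : u - v ≤ |u - v| := le_abs_self _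

lemma sub_le_abs' (u v : ℝ) : v - u ≤ |u - v| := by
  rw [abs_sub_comm]; exact le_abs_self _

lemma coef_le (x y : ℝ) :
    (coef S s t x).1 + (coef S s t x).2 * y + psi S s t y ≤ cst s t (x, y) := by
  classical
  have hψ := psi_nonpos S s t y
  by_cases hxX : x ∈ S.image Prod.fst
  · by_cases hxs : s < x
    · rw [cst_of_gt hxs, coef, if_pos hxX, if_pos hxs]
      simpa using hψ
    · rw [cst_of_le (not_lt.1 hxs)]
      have key : (coef S s t x).1 + (coef S s t x).2 * y ≤ max (|y - t|) (chord S s t y) := by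
        have hch : (t - p S s t) - lam S s t * p S s t + lam S s t * y
            ≤ max (|y - t|) (chord S s t y) := by
          have : (t - p S s t) - lam S s t * p S s t + lam S s t * y = chord S s t y := by
            rw [chord]; ring
          rw [this]; exact le_max_right _ _
        have hl : t + (-1) * y ≤ max (|y - t|) (chord S s t y) :=
          le_trans (by have := sub_le_abs' y t; linarith) (le_max_left _ _)
        have hr : -t + 1 * y ≤ max (|y - t|) (chord S s t y) :=
          le_trans (by have := sub_le_abs y t; linarith) (le_max_left _ _)
        rw [coef, if_pos hxX, if_neg hxs]
        split_ifs <;> first | simpa using hch | simpa using hl | simpa using hr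
      rw [psi]; linarith
  · rw [coef_support S s t hxX]
    have := cst_nonneg s t (x, y)
    simpa using by linarith

lemma chord_lin (y : ℝ) :
    (t - p S s t) - lam S s t * p S s t + lam S s t * y = chord S s t y := by
  rw [chord]; ring

lemma coef_eq
    (hmono : ∀ ⦃x y₁ y₂ x' y' : ℝ⦄, (x, y₁) ∈ S → (x, y₂) ∈ S → (x', y') ∈ S →
      x < x' → y₁ < y₂ → y' ≤ y₁ ∨ y₂ ≤ y')
    {x y : ℝ} (hr : (x, y) ∈ S) :
    (coef S s t x).1 + (coef S s t x).2 * y + psi S s t y = cst s t (x, y) := by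
  classical
  have hxX : x ∈ S.image Prod.fst := Finset.mem_image_of_mem Prod.fst hr
  have hlin := chord_lin S s t y
  by_cases hxs : s < x
  · rw [cst_of_gt hxs, coef, if_pos hxX, if_pos hxs]
    have hyout : y ≤ p S s t ∨ q S s t ≤ y := by
      by_cases hne : (YS S s t).Nonempty
      · rcases le_total y t with hyt | hyt
        · left
          obtain ⟨xj, hj, hjs, y₁, y₂, h1, h2, h1t, h2t⟩ := pmem S s t hne
          have hplt := p_lt_t S s t hne
          rcases hmono hj h2 hr (lt_of_le_of_lt hjs hxs) (by linarith) with h | h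
          · exact h
          · linarith
        · right
          obtain ⟨xm, hm, hms, y₁, y₂, h1, h2, h1t, h2t⟩ := qmem S s t hne
          have hqgt := t_lt_q S s t hne
          rcases hmono h1 hm hr (lt_of_le_of_lt hms hxs) (by linarith) with h | h
          · linarith
          · exact h
      · rw [p_eq_t S s t hne, q_eq_t S s t hne]; exact le_total y t
    have hch : chord S s t y ≤ |y - t| := by
      rcases hyout with h | h
      · exact le_trans (Fle S s t h) (sub_le_abs' y t)
      · exact le_trans (Fge S s t h) (sub_le_abs y t)
    rw [psi_eq_zero S s t hch]
    norm_num
  · have hxs' : x ≤ s := not_lt.1 hxs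
    rw [cst_of_le hxs', coef, if_pos hxX, if_neg hxs]
    by_cases hEx : E S t x
    · rw [if_pos hEx]
      obtain ⟨hpy, hyq⟩ := bounds_of_mem S s t hr hxs' hEx
      have hpc := psi_chord S s t (Fmid S s t hpy hyq)
      simp only
      linarith
    · rw [if_neg hEx]
      by_cases hL : ∀ y', (x, y') ∈ S → y' ≤ t
      · rw [if_pos hL]
        by_cases hLp : ∀ y', (x, y') ∈ S → y' ≤ p S s t
        · rw [if_pos hLp]
          have hyp : y ≤ p S s t := hLp y hr
          have hψ0 : psi S s t y = 0 :=
            psi_eq_zero S s t (le_trans (Fle S s t hyp) (sub_le_abs' y t))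
          have habs : |y - t| = t - y := by
            rw [abs_of_nonpos (by linarith [p_le_t S s t])]; ring
          rw [hψ0, habs]
          ring
        · rw [if_neg hLp]
          push_neg at hLp
          obtain ⟨w, hwS, hwp⟩ := hLp
          have hyt : y ≤ t := hL y hr
          have hwt : w ≤ t := hL w hwS
          have hpy : p S s t ≤ y := by
            by_contra hyp
            push_neg at hyp
            by_cases hne : (YS S s t).Nonempty
            · obtain ⟨xj, hj, hjs, y₁, y₂, h1, h2, h1t, h2t⟩ := pmem S s t hne
              have hplt := p_lt_t S s t hne
              rcases lt_trichotomy x xj with hlt | heqx | hgt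
              · rcases hmono hr hwS hj hlt (by linarith) with h | h
                · linarith
                · linarith
              · apply hEx
                rw [heqx]
                exact ⟨y₁, y₂, h1, h2, h1t, h2t⟩
              · rcases hmono hj h2 hwS hgt (by linarith) with h | h
                · linarith
                · linarith
            · have := p_eq_t S s t hne
              linarith
          have hpc := psi_chord S s t (Fmid S s t hpy (by linarith [t_le_q S s t]))
          simp only
          linarith
      · rw [if_neg hL]
        push_neg at hL
        obtain ⟨u, huS, hut⟩ := hL
        have hR : ∀ y', (x, y') ∈ S → t ≤ y' := by
          intro y' hy'
          by_contra h
          push_neg at h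
          exact hEx ⟨y', u, hy', huS, h, hut⟩
        by_cases hRq : ∀ y', (x, y') ∈ S → q S s t ≤ y'
        · rw [if_pos hRq]
          have hqy : q S s t ≤ y := hRq y hr
          have hψ0 : psi S s t y = 0 :=
            psi_eq_zero S s t (le_trans (Fge S s t hqy) (sub_le_abs y t))
          have habs : |y - t| = y - t := abs_of_nonneg (by linarith [t_le_q S s t])
          rw [hψ0, habs]
          ring
        · rw [if_neg hRq]
          push_neg at hRq
          obtain ⟨w, hwS, hwq⟩ := hRq
          have hty : t ≤ y := hR y hr
          have htw : t ≤ w := hR w hwS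
          have hyq : y ≤ q S s t := by
            by_contra hq'
            push_neg at hq'
            by_cases hne : (YS S s t).Nonempty
            · obtain ⟨xm, hm, hms, y₁, y₂, h1, h2, h1t, h2t⟩ := qmem S s t hne
              have hqgt := t_lt_q S s t hne
              rcases lt_trichotomy x xm with hlt | heqx | hgt
              · rcases hmono hwS hr hm hlt (by linarith) with h | h
                · linarith
                · linarith
              · apply hEx
                rw [heqx]
                exact ⟨y₁, y₂, h1, h2, h1t, h2t⟩
              · rcases hmono h1 hm hwS hgt (by linarith) with h | h
                · linarith
                · linarith
            · have := q_eq_t S s t hne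
              linarith
          have hpc := psi_chord S s t (Fmid S s t (by linarith [p_le_t S s t]) hyq)
          simp only
          linarith

lemma measurable_psi : Measurable (psi S s t) := by
  have : Continuous (psi S s t) := by
    unfold psi chord
    fun_prop
  exact this.measurable

lemma measurable_a : Measurable (fun x => (coef S s t x).1) :=
  measurable_of_finsupp (S.image Prod.fst) _ (fun x hx => by rw [coef_support S s t hx])

lemma measurable_b : Measurable (fun x => (coef S s t x).2) :=
  measurable_of_finsupp (S.image Prod.fst) _ (fun x hx => by rw [coef_support S s t hx])

end LMdual

lemma integrable_of_null_compl {μ : Measure (ℝ × ℝ)} [IsFiniteMeasure μ] (G : Finset (ℝ × ℝ))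
    (hG : μ ((↑G : Set (ℝ × ℝ))ᶜ) = 0) {f : ℝ × ℝ → ℝ}
    (hf : AEStronglyMeasurable f μ) : Integrable f μ := by
  refine ⟨hf, ?_⟩
  apply MeasureTheory.HasFiniteIntegral.of_bounded (C := ∑ r ∈ G, ‖f r‖)
  have hae : ∀ᵐ r ∂μ, r ∈ (↑G : Set (ℝ × ℝ)) := by
    rw [MeasureTheory.ae_iff]
    exact hG
  filter_upwards [hae] with r hr
  exact Finset.single_le_sum (f := fun q => ‖f q‖) (fun _ _ => norm_nonneg _) hr


/-- **Lemma 3.1.** A left-monotone set `Γ` is `c_{s,t}`-finitely optimal for all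
`s, t ∈ ℝ`. -/
theorem leftMonotone_finitelyOptimal_cst
    (Γ : Set (ℝ × ℝ)) (hΓ : LeftMonotone Γ) (s t : ℝ) :
    FinitelyOptimal (cst s t) Γ := by
  classical
  intro α hα hconc α' hcomp
  obtain ⟨S, hSΓ, hSnull⟩ := hconc
  haveI := hα
  obtain ⟨hfin', hfst, hsnd, hfib⟩ := hcomp
  haveI := hfin'
  -- left-monotonicity restricted to S
  have hmono : ∀ ⦃x y₁ y₂ x' y' : ℝ⦄, (x, y₁) ∈ S → (x, y₂) ∈ S → (x', y') ∈ S →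
      x < x' → y₁ < y₂ → y' ≤ y₁ ∨ y₂ ≤ y' := by
    intro x y₁ y₂ x' y' h1 h2 h3 hx hy
    exact hΓ (hSΓ h1) (hSΓ h2) (hSΓ h3) hx hy
  set a : ℝ → ℝ := fun x => (LMdual.coef S s t x).1 with ha_def
  set b : ℝ → ℝ := fun x => (LMdual.coef S s t x).2 with hb_def
  set ψ : ℝ → ℝ := LMdual.psi S s t with hψ_def
  have ha : Measurable a := LMdual.measurable_a S s t
  have hb : Measurable b := LMdual.measurable_b S s t
  have hψ : Measurable ψ := LMdual.measurable_psi S s t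
  have hsupp : ∀ x, x ∉ S.image Prod.fst → a x = 0 ∧ b x = 0 := by
    intro x hx
    constructor <;> simp [ha_def, hb_def, LMdual.coef_support S s t hx]
  have hle : ∀ r : ℝ × ℝ, a r.1 + b r.1 * r.2 + ψ r.2 ≤ cst s t r := by
    intro r
    have := LMdual.coef_le S s t r.1 r.2
    simpa using this
  have heqS : ∀ r ∈ S, a r.1 + b r.1 * r.2 + ψ r.2 = cst s t r := by
    intro r hr
    have hr' : (r.1, r.2) ∈ S := by simpa using hr
    have := LMdual.coef_eq S s t hmono hr'
    simpa using this
  set X : Finset ℝ := S.image Prod.fst with hX_def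
  set Y : Finset ℝ := S.image Prod.snd with hY_def
  set G : Finset (ℝ × ℝ) := X ×ˢ Y with hG_def
  have hXmeas : MeasurableSet (↑X : Set ℝ) := (Finset.finite_toSet X).measurableSet
  have hYmeas : MeasurableSet (↑Y : Set ℝ) := (Finset.finite_toSet Y).measurableSet
  -- α' is concentrated on the grid G
  have hα'X : α' (Prod.fst ⁻¹' (↑X : Set ℝ)ᶜ) = 0 := by
    have h1 : α'.map Prod.fst ((↑X : Set ℝ)ᶜ) = α.map Prod.fst ((↑X : Set ℝ)ᶜ) := by
      rw [hfst]
    rw [Measure.map_apply measurable_fst hXmeas.compl,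
        Measure.map_apply measurable_fst hXmeas.compl] at h1
    rw [h1]
    refine measure_mono_null ?_ hSnull
    intro r hr hrS
    exact hr (Finset.mem_coe.2 (Finset.mem_image_of_mem Prod.fst (Finset.mem_coe.1 hrS)))
  have hα'Y : α' (Prod.snd ⁻¹' (↑Y : Set ℝ)ᶜ) = 0 := by
    have h1 : α'.map Prod.snd ((↑Y : Set ℝ)ᶜ) = α.map Prod.snd ((↑Y : Set ℝ)ᶜ) := by
      rw [hsnd]
    rw [Measure.map_apply measurable_snd hYmeas.compl,
        Measure.map_apply measurable_snd hYmeas.compl] at h1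
    rw [h1]
    refine measure_mono_null ?_ hSnull
    intro r hr hrS
    exact hr (Finset.mem_coe.2 (Finset.mem_image_of_mem Prod.snd (Finset.mem_coe.1 hrS)))
  have hSG : (↑G : Set (ℝ × ℝ))ᶜ ⊆ (↑S : Set (ℝ × ℝ))ᶜ := by
    intro r hr hrS
    apply hr
    have : r ∈ G := by
      rw [hG_def, Finset.mem_product]
      exact ⟨Finset.mem_image_of_mem Prod.fst (Finset.mem_coe.1 hrS),
        Finset.mem_image_of_mem Prod.snd (Finset.mem_coe.1 hrS)⟩
    exact Finset.mem_coe.2 this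
  have hGnull : α ((↑G : Set (ℝ × ℝ))ᶜ) = 0 := measure_mono_null hSG hSnull
  have hG'null : α' ((↑G : Set (ℝ × ℝ))ᶜ) = 0 := by
    refine measure_mono_null ?_ (measure_union_null hα'X hα'Y)
    intro r hr
    by_contra h
    simp only [Set.mem_union, Set.mem_preimage, Set.mem_compl_iff, not_or, not_not] at h
    apply hr
    refine Finset.mem_coe.2 ?_
    rw [hG_def, Finset.mem_product]
    exact ⟨Finset.mem_coe.1 h.1, Finset.mem_coe.1 h.2⟩
  -- measurability of the pieces
  have hcmeas : Measurable (cst s t) := by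
    unfold cst
    exact ((measurable_const.indicator measurableSet_Iic).comp measurable_fst).mul
      ((measurable_snd.sub measurable_const).abs)
  set A : ℝ × ℝ → ℝ := fun r => a r.1 with hA_def
  set B : ℝ × ℝ → ℝ := fun r => b r.1 * r.2 with hB_def
  set Ψ : ℝ × ℝ → ℝ := fun r => ψ r.2 with hΨ_def
  have hAmeas : Measurable A := ha.comp measurable_fst
  have hBmeas : Measurable B := (hb.comp measurable_fst).mul measurable_snd
  have hΨmeas : Measurable Ψ := hψ.comp measurable_snd
  set D : ℝ × ℝ → ℝ := fun r => A r + B r + Ψ r with hD_def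
  have hDmeas : Measurable D := (hAmeas.add hBmeas).add hΨmeas
  -- integrability
  have IntA : Integrable A α := integrable_of_null_compl G hGnull hAmeas.aestronglyMeasurable
  have IntA' : Integrable A α' := integrable_of_null_compl G hG'null hAmeas.aestronglyMeasurable
  have IntB : Integrable B α := integrable_of_null_compl G hGnull hBmeas.aestronglyMeasurable
  have IntB' : Integrable B α' := integrable_of_null_compl G hG'null hBmeas.aestronglyMeasurable
  have IntΨ : Integrable Ψ α := integrable_of_null_compl G hGnull hΨmeas.aestronglyMeasurable
  have IntΨ' : Integrable Ψ α' := integrable_of_null_compl G hG'null hΨmeas.aestronglyMeasurable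
  have IntD : Integrable D α := (IntA.add IntB).add IntΨ
  have IntD' : Integrable D α' := (IntA'.add IntB').add IntΨ'
  have Intc : Integrable (cst s t) α :=
    integrable_of_null_compl G hGnull hcmeas.aestronglyMeasurable
  have Intc' : Integrable (cst s t) α' :=
    integrable_of_null_compl G hG'null hcmeas.aestronglyMeasurable
  -- Step 1 : ∫ c dα = ∫ D dα
  have step1 : ∫ r, cst s t r ∂α = ∫ r, D r ∂α := by
    refine integral_congr_ae ?_
    have hsub : {r : ℝ × ℝ | ¬ cst s t r = D r} ⊆ (↑S : Set (ℝ × ℝ))ᶜ := by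
      intro r hr hrS
      exact hr ((heqS r (Finset.mem_coe.1 hrS)).symm)
    rw [Filter.EventuallyEq, ae_iff]
    exact measure_mono_null hsub hSnull
  -- Step 2 : ∫ D dα = ∫ D dα'
  have hAeq : ∫ r, A r ∂α = ∫ r, A r ∂α' := by
    have e1 : ∫ x, a x ∂(α.map Prod.fst) = ∫ r, a r.1 ∂α :=
      integral_map measurable_fst.aemeasurable ha.aestronglyMeasurable
    have e2 : ∫ x, a x ∂(α'.map Prod.fst) = ∫ r, a r.1 ∂α' :=
      integral_map measurable_fst.aemeasurable ha.aestronglyMeasurable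
    rw [hA_def, ← e1, ← e2, hfst]
  have hΨeq : ∫ r, Ψ r ∂α = ∫ r, Ψ r ∂α' := by
    have e1 : ∫ y, ψ y ∂(α.map Prod.snd) = ∫ r, ψ r.2 ∂α :=
      integral_map measurable_snd.aemeasurable hψ.aestronglyMeasurable
    have e2 : ∫ y, ψ y ∂(α'.map Prod.snd) = ∫ r, ψ r.2 ∂α' :=
      integral_map measurable_snd.aemeasurable hψ.aestronglyMeasurable
    rw [hΨ_def, ← e1, ← e2, hsnd]
  have hBdecomp : B = fun r => ∑ x₀ ∈ X,
      ((({x₀} : Set ℝ) ×ˢ (Set.univ : Set ℝ)).indicator (fun r' => b x₀ * r'.2) r) := by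
    funext r
    by_cases hr1 : r.1 ∈ X
    · rw [Finset.sum_eq_single_of_mem r.1 hr1]
      · rw [Set.indicator_of_mem]
        exact ⟨rfl, trivial⟩
      · intro x₀ _ hne
        apply Set.indicator_of_notMem
        intro hmem
        exact hne (Set.mem_singleton_iff.1 hmem.1).symm
    · have hb0 : b r.1 = 0 := (hsupp r.1 hr1).2
      rw [show B r = b r.1 * r.2 from rfl, hb0, zero_mul]
      symm
      apply Finset.sum_eq_zero
      intro x₀ hx₀
      apply Set.indicator_of_notMem
      intro hmem
      rw [Set.mem_singleton_iff.1 hmem.1] at hr1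
      exact hr1 hx₀
  have hsetmeas : ∀ x₀ : ℝ, MeasurableSet (({x₀} : Set ℝ) ×ˢ (Set.univ : Set ℝ)) :=
    fun x₀ => (measurableSet_singleton x₀).prod MeasurableSet.univ
  have hindmeas : ∀ x₀ : ℝ, Measurable
      (fun r : ℝ × ℝ => (({x₀} : Set ℝ) ×ˢ (Set.univ : Set ℝ)).indicator (fun r' => b x₀ * r'.2) r) :=
    fun x₀ => (measurable_snd.const_mul (b x₀)).indicator (hsetmeas x₀)
  have hBint : ∀ μ : Measure (ℝ × ℝ), IsFiniteMeasure μ → μ ((↑G : Set (ℝ × ℝ))ᶜ) = 0 →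
      ∫ r, B r ∂μ = ∑ x₀ ∈ X, b x₀ * ∫ r in (({x₀} : Set ℝ) ×ˢ (Set.univ : Set ℝ)), r.2 ∂μ := by
    intro μ hμ hμG
    haveI := hμ
    rw [hBdecomp]
    rw [integral_finset_sum X (fun x₀ _ =>
      integrable_of_null_compl G hμG (hindmeas x₀).aestronglyMeasurable)]
    refine Finset.sum_congr rfl (fun x₀ _ => ?_)
    rw [integral_indicator (hsetmeas x₀)]
    exact integral_const_mul _ _
  have hBeq : ∫ r, B r ∂α = ∫ r, B r ∂α' := by
    rw [hBint α hα hGnull, hBint α' hfin' hG'null]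
    · refine Finset.sum_congr rfl (fun x₀ _ => ?_)
      rw [(hfib x₀).2]
  have IntAB : Integrable (fun r => A r + B r) α := IntA.add IntB
  have IntAB' : Integrable (fun r => A r + B r) α' := IntA'.add IntB'
  have step2 : ∫ r, D r ∂α = ∫ r, D r ∂α' := by
    have eα : ∫ r, D r ∂α = (∫ r, (A r + B r) ∂α) + ∫ r, Ψ r ∂α := integral_add IntAB IntΨ
    have eα2 : ∫ r, (A r + B r) ∂α = (∫ r, A r ∂α) + ∫ r, B r ∂α := integral_add IntA IntB
    have eβ : ∫ r, D r ∂α' = (∫ r, (A r + B r) ∂α') + ∫ r, Ψ r ∂α' := integral_add IntAB' IntΨ'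
    have eβ2 : ∫ r, (A r + B r) ∂α' = (∫ r, A r ∂α') + ∫ r, B r ∂α' := integral_add IntA' IntB'
    rw [eα, eα2, eβ, eβ2, hAeq, hBeq, hΨeq]
  -- Step 3 : ∫ D dα' ≤ ∫ c dα'
  have step3 : ∫ r, D r ∂α' ≤ ∫ r, cst s t r ∂α' :=
    integral_mono IntD' Intc' hle
  have hreal : ∫ r, cst s t r ∂α ≤ ∫ r, cst s t r ∂α' := by
    rw [step1, step2]; exact step3
  have hnn : 0 ≤ᵐ[α] cst s t := Filter.Eventually.of_forall (cst_nonneg s t)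
  have hnn' : 0 ≤ᵐ[α'] cst s t := Filter.Eventually.of_forall (cst_nonneg s t)
  rw [← ofReal_integral_eq_lintegral_ofReal Intc hnn,
      ← ofReal_integral_eq_lintegral_ofReal Intc' hnn']
  exact ENNReal.ofReal_le_ofReal hreal
end
end

section
/- Let Γ ⊆ ℝ×ℝ be a left-monotone set, let α be a finite measure concentrated on finitely many points of Γ, and let α' be a competitor of α. Then for every s ∈ ℝ, the second marginal of the restriction of α to (−∞,s] × ℝ is dominated in convex order by the second marginal of the restriction of α' to (−∞,s] × ℝ; that is, for every convex function f: ℝ → ℝ, ∫ f(y) d(α|_{(−∞,s]×ℝ})(x,y) ≤ ∫ f(y) d(α'|_{(−∞,s]×ℝ})(x,y). -/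
open MeasureTheory Set ENNReal

noncomputable section

section Auxiliary


/-- Convexity three-point inequality in cleared-denominator form. -/
lemma conv_combo {f : ℝ → ℝ} (hf : ConvexOn ℝ Set.univ f) {u v w : ℝ}
    (huv : u ≤ v) (hvw : v ≤ w) (huw : u < w) :
    f v * (w - u) ≤ f u * (w - v) + f w * (v - u) := by
  have h0 : (0:ℝ) < w - u := by linarith
  have key := hf.2 (mem_univ u) (mem_univ w)
    (div_nonneg (by linarith) (by linarith))
    (div_nonneg (by linarith) (by linarith))
    (show (w - v) / (w - u) + (v - u) / (w - u) = 1 by field_simp; ring)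
  have hc : ((w - v) / (w - u)) • u + ((v - u) / (w - u)) • w = v := by
    have hne : w - u ≠ 0 := h0.ne'
    simp only [smul_eq_mul]
    field_simp
    ring
  rw [hc, smul_eq_mul, smul_eq_mul, div_mul_eq_mul_div, div_mul_eq_mul_div,
    ← add_div, le_div_iff₀ h0] at key
  linarith

/-- The chord of `f` over `[p,q]`. -/
noncomputable def chordFn (f : ℝ → ℝ) (p q t : ℝ) : ℝ :=
  f p + (f q - f p) / (q - p) * (t - p)

lemma chordFn_affine (f : ℝ → ℝ) (p q t : ℝ) :
    chordFn f p q t = (f q - f p) / (q - p) * t + (f p - (f q - f p) / (q - p) * p) := by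
  rw [chordFn]; ring

lemma chordFn_left (f : ℝ → ℝ) (p q : ℝ) : chordFn f p q p = f p := by
  simp [chordFn]

lemma chordFn_right (f : ℝ → ℝ) {p q : ℝ} (h : p < q) : chordFn f p q q = f q := by
  have : q - p ≠ 0 := by linarith
  rw [chordFn, div_mul_cancel₀ _ this]; ring

/-- On `[p,q]` the chord lies above the convex function. -/
lemma le_chordFn {f : ℝ → ℝ} (hf : ConvexOn ℝ Set.univ f) {p q t : ℝ}
    (hpq : p < q) (h1 : p ≤ t) (h2 : t ≤ q) : f t ≤ chordFn f p q t := by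
  have h0 : (0:ℝ) < q - p := by linarith
  have key := conv_combo hf h1 h2 (by linarith)
  rw [chordFn, ← sub_le_iff_le_add', div_mul_eq_mul_div, le_div_iff₀ h0]
  nlinarith
  
/-- Outside `[p,q]` the chord lies below the convex function. -/
lemma chordFn_le {f : ℝ → ℝ} (hf : ConvexOn ℝ Set.univ f) {p q t : ℝ}
    (hpq : p < q) (h : t ≤ p ∨ q ≤ t) : chordFn f p q t ≤ f t := by
  have h0 : (0:ℝ) < q - p := by linarith
  rw [chordFn, ← le_sub_iff_add_le', div_mul_eq_mul_div, div_le_iff₀ h0]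
  rcases h with h | h
  · rcases eq_or_lt_of_le h with rfl | h
    · simp
    · have key := conv_combo hf h.le hpq.le (by linarith)
      nlinarith
  · rcases eq_or_lt_of_le h with rfl | h
    · exact le_of_eq (by ring)
    · have key := conv_combo hf hpq.le h.le (by linarith)
      nlinarith

/-- A convex function on `ℝ` has a supporting line at every point. -/
lemma exists_support_line {f : ℝ → ℝ} (hf : ConvexOn ℝ Set.univ f) (y0 : ℝ) :
    ∃ c : ℝ, ∀ t : ℝ, f y0 + c * (t - y0) ≤ f t := by
  set A : Set ℝ := (fun u => (f u - f y0) / (u - y0)) '' Ioi y0 with hA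
  have hne : A.Nonempty := ⟨_, ⟨y0 + 1, by simp, rfl⟩⟩
  have hbdd : BddBelow A := by
    refine ⟨f y0 - f (y0 - 1), ?_⟩
    rintro r ⟨u, hu, rfl⟩
    have := hf.slope_mono_adjacent (mem_univ (y0 - 1)) (mem_univ u)
      (by linarith) hu
    simp only [show y0 - (y0 - 1) = 1 by ring, div_one] at this
    linarith [this]
  refine ⟨sInf A, fun t => ?_⟩
  rcases lt_trichotomy t y0 with h | rfl | h
  · have hle : (f y0 - f t) / (y0 - t) ≤ sInf A := by
      apply le_csInf hne
      rintro r ⟨u, hu, rfl⟩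
      exact hf.slope_mono_adjacent (mem_univ t) (mem_univ u) h hu
    have h0 : (0:ℝ) < y0 - t := by linarith
    have := mul_le_mul_of_nonneg_right hle h0.le
    rw [div_mul_cancel₀ _ h0.ne'] at this
    nlinarith
  · simp
  · have hle : sInf A ≤ (f t - f y0) / (t - y0) := csInf_le hbdd ⟨t, h, rfl⟩
    have h0 : (0:ℝ) < t - y0 := by linarith
    have := mul_le_mul_of_nonneg_right hle h0.le
    rw [div_mul_cancel₀ _ h0.ne'] at this
    linarith


/-- Structure of a connected component of a bounded open subset of `ℝ`. -/
lemma comp_structure {U : Set ℝ} (hU : IsOpen U) (hbb : BddBelow U) (hba : BddAbove U)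
    {t : ℝ} (ht : t ∈ U) :
    sInf (connectedComponentIn U t) < sSup (connectedComponentIn U t) ∧
    connectedComponentIn U t =
      Ioo (sInf (connectedComponentIn U t)) (sSup (connectedComponentIn U t)) ∧
    sInf (connectedComponentIn U t) ∉ U ∧ sSup (connectedComponentIn U t) ∉ U := by
  set C := connectedComponentIn U t with hC
  have hCopen : IsOpen C := hU.connectedComponentIn
  have hCsub : C ⊆ U := connectedComponentIn_subset U t
  have hCne : C.Nonempty := ⟨t, mem_connectedComponentIn ht⟩
  have hCbb : BddBelow C := hbb.mono hCsub
  have hCba : BddAbove C := hba.mono hCsub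
  set p := sInf C
  set q := sSup C
  have hsubIcc : C ⊆ Icc p q := fun c hc => ⟨csInf_le hCbb hc, le_csSup hCba hc⟩
  -- openness: around every point of C there is an interval
  have hball : ∀ c ∈ C, ∃ ε > 0, Ioo (c - ε) (c + ε) ⊆ C := by
    intro c hc
    rcases Metric.isOpen_iff.1 hCopen c hc with ⟨ε, hε, hsub⟩
    exact ⟨ε, hε, by rw [← Real.ball_eq_Ioo]; exact hsub⟩
  have hpq : p < q := by
    rcases hCne with ⟨c, hc⟩
    rcases hball c hc with ⟨ε, hε, hsub⟩
    have h1 : c - ε / 2 ∈ C := hsub ⟨by linarith, by linarith⟩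
    have h2 : c + ε / 2 ∈ C := hsub ⟨by linarith, by linarith⟩
    calc p ≤ c - ε / 2 := csInf_le hCbb h1
      _ < c + ε / 2 := by linarith
      _ ≤ q := le_csSup hCba h2
  have hpnot : p ∉ C := by
    intro hp
    rcases hball p hp with ⟨ε, hε, hsub⟩
    have : p - ε / 2 ∈ C := hsub ⟨by linarith, by linarith⟩
    linarith [csInf_le hCbb this]
  have hqnot : q ∉ C := by
    intro hq
    rcases hball q hq with ⟨ε, hε, hsub⟩
    have : q + ε / 2 ∈ C := hsub ⟨by linarith, by linarith⟩
    linarith [le_csSup hCba this]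
  have hIooSub : Ioo p q ⊆ C := by
    intro y hy
    rcases exists_lt_of_csInf_lt hCne hy.1 with ⟨u, hu, huy⟩
    rcases exists_lt_of_lt_csSup hCne hy.2 with ⟨v, hv, hyv⟩
    have hOrd : OrdConnected C := isPreconnected_connectedComponentIn.ordConnected
    exact hOrd.out hu hv ⟨huy.le, hyv.le⟩
  have hCeq : C = Ioo p q := by
    apply Subset.antisymm _ hIooSub
    intro c hc
    rcases hsubIcc hc with ⟨h1, h2⟩
    refine ⟨lt_of_le_of_ne h1 ?_, lt_of_le_of_ne h2 ?_⟩
    · rintro rfl; exact hpnot hc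
    · rintro rfl; exact hqnot hc
  -- endpoints are not in U
  have hball' : ∀ (D : Set ℝ), IsOpen D → ∀ c ∈ D, ∃ ε > 0, Ioo (c - ε) (c + ε) ⊆ D := by
    intro D hD c hc
    rcases Metric.isOpen_iff.1 hD c hc with ⟨ε, hε, hsub⟩
    exact ⟨ε, hε, by rw [← Real.ball_eq_Ioo]; exact hsub⟩
  have hpU : p ∉ U := by
    intro hp
    rcases hball' _ (hU.connectedComponentIn (x := p)) p (mem_connectedComponentIn hp)
      with ⟨ε, hε, hsub⟩
    set y := p + min ε (q - p) / 2 with hy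
    have hy1 : y ∈ connectedComponentIn U p := by
      apply hsub
      constructor
      · have : (0:ℝ) < min ε (q - p) := lt_min hε (by linarith)
        simp only [hy]; linarith
      · have h1 : min ε (q - p) ≤ ε := min_le_left _ _
        have : (0:ℝ) < min ε (q - p) := lt_min hε (by linarith)
        simp only [hy]; linarith
    have hy2 : y ∈ C := by
      rw [hCeq]
      have h2 : min ε (q - p) ≤ q - p := min_le_right _ _
      have : (0:ℝ) < min ε (q - p) := lt_min hε (by linarith)
      exact ⟨by simp only [hy]; linarith, by simp only [hy]; linarith⟩
    have e1 : connectedComponentIn U p = connectedComponentIn U y :=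
      connectedComponentIn_eq hy1
    have e2 : C = connectedComponentIn U y := connectedComponentIn_eq hy2
    have : p ∈ C := by
      rw [e2, ← e1]; exact mem_connectedComponentIn hp
    exact hpnot this
  have hqU : q ∉ U := by
    intro hq
    rcases hball' _ (hU.connectedComponentIn (x := q)) q (mem_connectedComponentIn hq)
      with ⟨ε, hε, hsub⟩
    set y := q - min ε (q - p) / 2 with hy
    have hy1 : y ∈ connectedComponentIn U q := by
      apply hsub
      have h1 : min ε (q - p) ≤ ε := min_le_left _ _
      have : (0:ℝ) < min ε (q - p) := lt_min hε (by linarith)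
      exact ⟨by simp only [hy]; linarith, by simp only [hy]; linarith⟩
    have hy2 : y ∈ C := by
      rw [hCeq]
      have h2 : min ε (q - p) ≤ q - p := min_le_right _ _
      have : (0:ℝ) < min ε (q - p) := lt_min hε (by linarith)
      exact ⟨by simp only [hy]; linarith, by simp only [hy]; linarith⟩
    have e1 : connectedComponentIn U q = connectedComponentIn U y :=
      connectedComponentIn_eq hy1
    have e2 : C = connectedComponentIn U y := connectedComponentIn_eq hy2
    have : q ∈ C := by
      rw [e2, ← e1]; exact mem_connectedComponentIn hq
    exact hqnot this
  exact ⟨hpq, hCeq, hpU, hqU⟩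

open scoped Classical in
/-- `f` with each component of `U` replaced by the chord of `f` over its closure. -/
noncomputable def gmod (f : ℝ → ℝ) (U : Set ℝ) : ℝ → ℝ := fun t =>
  if t ∈ U then
    chordFn f (sInf (connectedComponentIn U t)) (sSup (connectedComponentIn U t)) t
  else f t

lemma gmod_of_not_mem {f : ℝ → ℝ} {U : Set ℝ} {t : ℝ} (h : t ∉ U) : gmod f U t = f t :=
  if_neg h

lemma le_gmod {f : ℝ → ℝ} {U : Set ℝ} (hf : ConvexOn ℝ Set.univ f)
    (hU : IsOpen U) (hbb : BddBelow U) (hba : BddAbove U) (t : ℝ) :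
    f t ≤ gmod f U t := by
  by_cases ht : t ∈ U
  · obtain ⟨hpq, heq, -, -⟩ := comp_structure hU hbb hba ht
    have htC : t ∈ connectedComponentIn U t := mem_connectedComponentIn ht
    rw [heq] at htC
    rw [gmod, if_pos ht]
    exact le_chordFn hf hpq htC.1.le htC.2.le
  · rw [gmod_of_not_mem ht]

lemma gmod_eq_chord {f : ℝ → ℝ} {U : Set ℝ} (hf : ConvexOn ℝ Set.univ f)
    (hU : IsOpen U) (hbb : BddBelow U) (hba : BddAbove U) {t0 : ℝ} (ht0 : t0 ∈ U) :
    ∀ t ∈ Icc (sInf (connectedComponentIn U t0)) (sSup (connectedComponentIn U t0)),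
      gmod f U t = chordFn f (sInf (connectedComponentIn U t0))
        (sSup (connectedComponentIn U t0)) t := by
  obtain ⟨hpq, heq, hpU, hqU⟩ := comp_structure hU hbb hba ht0
  intro t ht
  by_cases htU : t ∈ U
  · have htIoo : t ∈ Ioo (sInf (connectedComponentIn U t0)) (sSup (connectedComponentIn U t0)) := by
      refine ⟨lt_of_le_of_ne ht.1 ?_, lt_of_le_of_ne ht.2 ?_⟩
      · rintro rfl; exact hpU htU
      · rintro rfl; exact hqU htU
    have htC : t ∈ connectedComponentIn U t0 := by rw [heq]; exact htIoo
    have hcc : connectedComponentIn U t0 = connectedComponentIn U t :=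
      connectedComponentIn_eq htC
    rw [gmod, if_pos htU, ← hcc]
  · rw [gmod_of_not_mem htU]
    have : t ∉ Ioo (sInf (connectedComponentIn U t0)) (sSup (connectedComponentIn U t0)) := by
      rw [← heq]; intro hc; exact htU (connectedComponentIn_subset U t0 hc)
    rcases ht.1.eq_or_lt with rfl | hlt
    · exact (chordFn_left f _ _).symm
    rcases ht.2.eq_or_lt with rfl | hlt2
    · exact (chordFn_right f hpq).symm
    · exact absurd ⟨hlt, hlt2⟩ this

lemma chord_le_gmod {f : ℝ → ℝ} {U : Set ℝ} (hf : ConvexOn ℝ Set.univ f)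
    (hU : IsOpen U) (hbb : BddBelow U) (hba : BddAbove U) {t0 : ℝ} (ht0 : t0 ∈ U) (t : ℝ) :
    chordFn f (sInf (connectedComponentIn U t0)) (sSup (connectedComponentIn U t0)) t
      ≤ gmod f U t := by
  obtain ⟨hpq, heq, hpU, hqU⟩ := comp_structure hU hbb hba ht0
  by_cases ht : t ∈ Icc (sInf (connectedComponentIn U t0)) (sSup (connectedComponentIn U t0))
  · exact le_of_eq (gmod_eq_chord hf hU hbb hba ht0 t ht).symm
  · have h' : t < sInf (connectedComponentIn U t0) ∨ sSup (connectedComponentIn U t0) < t := by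
      by_contra hc
      push_neg at hc
      exact ht ⟨hc.1, hc.2⟩
    have := chordFn_le hf hpq (by rcases h' with h | h; exacts [Or.inl h.le, Or.inr h.le])
    exact this.trans (le_gmod hf hU hbb hba t)

/-- A measure concentrated on a finite set evaluates by summing point masses. -/
lemma measure_eq_sum_of_concentrated {δ : Type*} [MeasurableSpace δ]
    [MeasurableSingletonClass δ] (μ : Measure δ) (T : Finset δ)
    (hT : μ ((↑T : Set δ)ᶜ) = 0) {E : Set δ} (hE : MeasurableSet E)
    (P : δ → Prop) [DecidablePred P] (hP : ∀ p, p ∈ E ↔ P p) :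
    μ E = ∑ p ∈ T.filter P, μ {p} := by
  have hTm : MeasurableSet (↑T : Set δ) := T.measurableSet
  have h1 : μ (E ∩ ↑T) + μ (E \ ↑T) = μ E := measure_inter_add_diff E hTm
  have h2 : μ (E \ ↑T) = 0 :=
    measure_mono_null (fun x hx => hx.2) hT
  have h3 : μ E = μ (E ∩ ↑T) := by rw [← h1, h2, add_zero]
  have h4 : E ∩ ↑T = ↑(T.filter P) := by
    ext p
    simp only [Set.mem_inter_iff, Finset.coe_filter, Set.mem_setOf_eq, Finset.mem_coe,
      Finset.mem_filter, hP p]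
    tauto
  have h5 := measure_biUnion_finset (μ := μ) (s := T.filter P)
    (f := fun p => ({p} : Set δ))
    (fun p _ q _ hpq => by simp [Set.disjoint_singleton, hpq])
    (fun p _ => measurableSet_singleton p)
  rw [h3, h4, ← h5]
  congr 1
  rw [← Finset.set_biUnion_coe, Set.biUnion_of_singleton]

/-- Integral over a set for a measure concentrated on a finite set. -/
lemma setIntegral_eq_sum_of_concentrated {δ : Type*} [MeasurableSpace δ]
    [MeasurableSingletonClass δ] (μ : Measure δ) [IsFiniteMeasure μ] (T : Finset δ)
    (hT : μ ((↑T : Set δ)ᶜ) = 0) {A : Set δ} (hA : MeasurableSet A) (h : δ → ℝ)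
    (P : δ → Prop) [DecidablePred P] (hP : ∀ p, p ∈ A ↔ P p) :
    ∫ p in A, h p ∂μ = ∑ p ∈ T.filter P, (μ {p}).toReal * h p := by
  set ν := μ.restrict A with hν
  have hνT : ν ((↑T : Set δ)ᶜ) = 0 := by
    rw [hν, Measure.restrict_apply T.measurableSet.compl]
    exact measure_mono_null (fun x hx => hx.1) hT
  have hae : ∀ᵐ x ∂ν, x ∈ (↑T : Set δ) := by
    rw [ae_iff]
    exact hνT
  have hres : ν.restrict (↑T : Set δ) = ν := Measure.restrict_eq_self_of_ae_mem hae
  have : ∫ p, h p ∂ν = ∫ p in (↑T : Set δ), h p ∂ν := by rw [hres]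
  rw [this, integral_finset T (f := h) IntegrableOn.finset]
  simp only [measureReal_def]
  have hterm : ∀ p ∈ T, (ν {p}).toReal • h p
      = if P p then (μ {p}).toReal * h p else 0 := by
    intro p _
    rw [hν, Measure.restrict_apply (measurableSet_singleton p)]
    by_cases hp : P p
    · rw [if_pos hp, show ({p} : Set δ) ∩ A = {p} by
        rw [Set.inter_eq_left]; exact Set.singleton_subset_iff.2 ((hP p).2 hp), smul_eq_mul]
    · rw [if_neg hp, show ({p} : Set δ) ∩ A = ∅ from
        Set.eq_empty_iff_forall_notMem.2 (fun q hq => hp (hq.1 ▸ (hP q).1 hq.2)),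
        measure_empty]
      simp
  rw [Finset.sum_congr rfl hterm, ← Finset.sum_filter]

open scoped Classical in
lemma core_sum_ineq (Γ : Set (ℝ × ℝ)) (hΓ : LeftMonotone Γ) (T : Finset (ℝ × ℝ))
    (a b : ℝ × ℝ → ℝ) (ha0 : ∀ p, 0 ≤ a p) (hb0 : ∀ p, 0 ≤ b p)
    (haΓ : ∀ p ∈ T, a p ≠ 0 → p ∈ Γ)
    (hmass : ∀ x : ℝ, ∑ p ∈ T.filter (fun p => p.1 = x), a p
      = ∑ p ∈ T.filter (fun p => p.1 = x), b p)
    (hmean : ∀ x : ℝ, ∑ p ∈ T.filter (fun p => p.1 = x), a p * p.2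
      = ∑ p ∈ T.filter (fun p => p.1 = x), b p * p.2)
    (hsnd : ∀ y : ℝ, ∑ p ∈ T.filter (fun p => p.2 = y), a p
      = ∑ p ∈ T.filter (fun p => p.2 = y), b p)
    (s : ℝ) (f : ℝ → ℝ) (hf : ConvexOn ℝ Set.univ f) :
    ∑ p ∈ T.filter (fun p => p.1 ≤ s), a p * f p.2
      ≤ ∑ p ∈ T.filter (fun p => p.1 ≤ s), b p * f p.2 := by
  -- the union of open intervals spanned by the supports at levels x ≤ s
  set U : Set ℝ := {y | ∃ x y1 y2 : ℝ, x ≤ s ∧ (x, y1) ∈ T ∧ a (x, y1) ≠ 0 ∧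
    (x, y2) ∈ T ∧ a (x, y2) ≠ 0 ∧ y1 < y ∧ y < y2} with hUdef
  have hUopen : IsOpen U := by
    rw [isOpen_iff_mem_nhds]
    rintro y ⟨x, y1, y2, hx, h1, ha1, h2, ha2, hy1, hy2⟩
    refine Filter.mem_of_superset (Ioo_mem_nhds hy1 hy2) ?_
    rintro z ⟨hz1, hz2⟩
    exact ⟨x, y1, y2, hx, h1, ha1, h2, ha2, hz1, hz2⟩
  have hUbb : BddBelow U := by
    by_cases hT : (T.image Prod.snd).Nonempty
    · refine ⟨(T.image Prod.snd).min' hT, ?_⟩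
      rintro y ⟨x, y1, y2, hx, h1, ha1, h2, ha2, hy1, hy2⟩
      exact le_trans (Finset.min'_le _ _ (Finset.mem_image_of_mem Prod.snd h1)) hy1.le
    · refine ⟨0, ?_⟩
      rintro y ⟨x, y1, y2, hx, h1, ha1, h2, ha2, hy1, hy2⟩
      exact absurd ⟨_, Finset.mem_image_of_mem Prod.snd h1⟩ hT
  have hUba : BddAbove U := by
    by_cases hT : (T.image Prod.snd).Nonempty
    · refine ⟨(T.image Prod.snd).max' hT, ?_⟩
      rintro y ⟨x, y1, y2, hx, h1, ha1, h2, ha2, hy1, hy2⟩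
      exact le_trans hy2.le (Finset.le_max' _ _ (Finset.mem_image_of_mem Prod.snd h2))
    · refine ⟨0, ?_⟩
      rintro y ⟨x, y1, y2, hx, h1, ha1, h2, ha2, hy1, hy2⟩
      exact absurd ⟨_, Finset.mem_image_of_mem Prod.snd h1⟩ hT
  set g : ℝ → ℝ := gmod f U with hgdef
  have hfg : ∀ t, f t ≤ g t := le_gmod hf hUopen hUbb hUba
  -- (C) equal T-sums against any function of the second coordinate
  have hall : ∀ φ : ℝ → ℝ, ∑ p ∈ T, a p * φ p.2 = ∑ p ∈ T, b p * φ p.2 := by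
    intro φ
    have key : ∀ c : ℝ × ℝ → ℝ, ∑ p ∈ T, c p * φ p.2
        = ∑ y ∈ T.image Prod.snd, (∑ p ∈ T.filter (fun p => p.2 = y), c p) * φ y := by
      intro c
      rw [← Finset.sum_fiberwise_of_maps_to (fun p hp => Finset.mem_image_of_mem Prod.snd hp)
        (fun p => c p * φ p.2)]
      refine Finset.sum_congr rfl fun y _ => ?_
      rw [Finset.sum_mul]
      refine Finset.sum_congr rfl fun p hp => ?_
      rw [(Finset.mem_filter.1 hp).2]
    rw [key a, key b]
    refine Finset.sum_congr rfl fun y _ => ?_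
    rw [hsnd y]
  -- (B) on the right of s, the support of a avoids U
  have hB : ∀ p ∈ T, ¬ p.1 ≤ s → a p ≠ 0 → g p.2 = f p.2 := by
    intro p hp hps hap
    have hpU : p.2 ∉ U := by
      rintro ⟨x, y1, y2, hx, h1, ha1, h2, ha2, hy1, hy2⟩
      have hg1 : (x, y1) ∈ Γ := haΓ _ h1 ha1
      have hg2 : (x, y2) ∈ Γ := haΓ _ h2 ha2
      have hgp : (p.1, p.2) ∈ Γ := by rw [Prod.mk.eta]; exact haΓ _ hp hap
      have := hΓ hg1 hg2 hgp (lt_of_le_of_lt hx (lt_of_not_ge hps)) (hy1.trans hy2)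
      rcases this with h | h <;> linarith
    exact gmod_of_not_mem hpU
  -- (A) per-fiber inequality for x ≤ s
  have hA : ∀ x : ℝ, x ≤ s → ∑ p ∈ T.filter (fun p => p.1 = x), a p * g p.2
      ≤ ∑ p ∈ T.filter (fun p => p.1 = x), b p * g p.2 := by
    intro x hxs
    set Tx := T.filter (fun p => p.1 = x) with hTx
    by_cases hsupp : ∃ p ∈ Tx, a p ≠ 0
    · -- construct an affine function h = c•t + d with h ≤ g, h = g on the support
      have haff : ∃ c d : ℝ, (∀ t, c * t + d ≤ g t) ∧
          (∀ p ∈ Tx, a p ≠ 0 → c * p.2 + d = g p.2) := by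
        by_cases htwo : ∃ p1 ∈ Tx, ∃ p2 ∈ Tx, a p1 ≠ 0 ∧ a p2 ≠ 0 ∧ p1.2 < p2.2
        · obtain ⟨p1, hp1, p2, hp2, ha1, ha2, hlt⟩ := htwo
          have hp1T : (x, p1.2) ∈ T ∧ a (x, p1.2) ≠ 0 := by
            have := Finset.mem_filter.1 hp1
            rw [show (x, p1.2) = p1 by rw [← this.2]]
            exact ⟨this.1, ha1⟩
          have hp2T : (x, p2.2) ∈ T ∧ a (x, p2.2) ≠ 0 := by
            have := Finset.mem_filter.1 hp2
            rw [show (x, p2.2) = p2 by rw [← this.2]]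
            exact ⟨this.1, ha2⟩
          set t0 := (p1.2 + p2.2) / 2 with ht0def
          have ht0 : t0 ∈ U := ⟨x, p1.2, p2.2, hxs, hp1T.1, hp1T.2, hp2T.1, hp2T.2,
            by simp only [ht0def]; linarith, by simp only [ht0def]; linarith⟩
          obtain ⟨hpq, hCeq, hpU, hqU⟩ := comp_structure hUopen hUbb hUba ht0
          set pp := sInf (connectedComponentIn U t0)
          set qq := sSup (connectedComponentIn U t0)
          have ht0C : t0 ∈ Ioo pp qq := by
            rw [← hCeq]; exact mem_connectedComponentIn ht0
          -- every support point of the fiber lies in [pp, qq]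
          have hKS : ∀ p ∈ Tx, a p ≠ 0 → p.2 ∈ Icc pp qq := by
            intro p hp hap
            have hpT : (x, p.2) ∈ T ∧ a (x, p.2) ≠ 0 := by
              have := Finset.mem_filter.1 hp
              rw [show (x, p.2) = p by rw [← this.2]]
              exact ⟨this.1, hap⟩
            rcases lt_trichotomy p.2 t0 with h | h | h
            · have hJ : Ioo p.2 p2.2 ⊆ U := by
                rintro z ⟨hz1, hz2⟩
                exact ⟨x, p.2, p2.2, hxs, hpT.1, hpT.2, hp2T.1, hp2T.2, hz1, hz2⟩
              have ht0J : t0 ∈ Ioo p.2 p2.2 := ⟨h, by simp only [ht0def]; linarith⟩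
              have hsub : Ioo p.2 p2.2 ⊆ Ioo pp qq := by
                rw [← hCeq]
                exact isPreconnected_Ioo.subset_connectedComponentIn ht0J hJ
              have := (Set.Ioo_subset_Ioo_iff (ht0J.1.trans ht0J.2)).1 hsub
              exact ⟨this.1, le_trans h.le ht0C.2.le⟩
            · exact ⟨by rw [h]; exact ht0C.1.le, by rw [h]; exact ht0C.2.le⟩
            · have hJ : Ioo p1.2 p.2 ⊆ U := by
                rintro z ⟨hz1, hz2⟩
                exact ⟨x, p1.2, p.2, hxs, hp1T.1, hp1T.2, hpT.1, hpT.2, hz1, hz2⟩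
              have ht0J : t0 ∈ Ioo p1.2 p.2 := ⟨by simp only [ht0def]; linarith, h⟩
              have hsub : Ioo p1.2 p.2 ⊆ Ioo pp qq := by
                rw [← hCeq]
                exact isPreconnected_Ioo.subset_connectedComponentIn ht0J hJ
              have := (Set.Ioo_subset_Ioo_iff (ht0J.1.trans ht0J.2)).1 hsub
              exact ⟨le_trans ht0C.1.le h.le, this.2⟩
          refine ⟨(f qq - f pp) / (qq - pp), f pp - (f qq - f pp) / (qq - pp) * pp, ?_, ?_⟩
          · intro t
            rw [← chordFn_affine]
            exact chord_le_gmod hf hUopen hUbb hUba ht0 t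
          · intro p hp hap
            rw [← chordFn_affine]
            exact (gmod_eq_chord hf hUopen hUbb hUba ht0 p.2 (hKS p hp hap)).symm
        · -- all support points share one second coordinate y0
          obtain ⟨p1, hp1, ha1⟩ := hsupp
          set y0 := p1.2 with hy0def
          have hone : ∀ p ∈ Tx, a p ≠ 0 → p.2 = y0 := by
            intro p hp hap
            by_contra hne
            rcases lt_or_gt_of_ne hne with h | h
            · exact htwo ⟨p, hp, p1, hp1, hap, ha1, h⟩
            · exact htwo ⟨p1, hp1, p, hp, ha1, hap, h⟩
          by_cases hy0U : y0 ∈ U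
          · obtain ⟨hpq, hCeq, hpU, hqU⟩ := comp_structure hUopen hUbb hUba hy0U
            set pp := sInf (connectedComponentIn U y0)
            set qq := sSup (connectedComponentIn U y0)
            have hy0C : y0 ∈ Ioo pp qq := by
              rw [← hCeq]; exact mem_connectedComponentIn hy0U
            refine ⟨(f qq - f pp) / (qq - pp), f pp - (f qq - f pp) / (qq - pp) * pp, ?_, ?_⟩
            · intro t
              rw [← chordFn_affine]
              exact chord_le_gmod hf hUopen hUbb hUba hy0U t
            · intro p hp hap
              rw [← chordFn_affine, hone p hp hap]
              exact (gmod_eq_chord hf hUopen hUbb hUba hy0U y0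
                ⟨hy0C.1.le, hy0C.2.le⟩).symm
          · obtain ⟨c, hc⟩ := exists_support_line hf y0
            refine ⟨c, f y0 - c * y0, ?_, ?_⟩
            · intro t
              calc c * t + (f y0 - c * y0) = f y0 + c * (t - y0) := by ring
                _ ≤ f t := hc t
                _ ≤ g t := hfg t
            · intro p hp hap
              rw [hone p hp hap]
              have : g y0 = f y0 := gmod_of_not_mem hy0U
              rw [this]; ring
      obtain ⟨c, d, hle, heq⟩ := haff
      have e1 : ∑ p ∈ Tx, a p * g p.2 = ∑ p ∈ Tx, a p * (c * p.2 + d) := by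
        refine Finset.sum_congr rfl fun p hp => ?_
        by_cases hap : a p = 0
        · rw [hap]; ring
        · rw [heq p hp hap]
      have e2 : ∀ cf : ℝ × ℝ → ℝ, ∑ p ∈ Tx, cf p * (c * p.2 + d)
          = c * (∑ p ∈ Tx, cf p * p.2) + d * (∑ p ∈ Tx, cf p) := by
        intro cf
        rw [Finset.mul_sum, Finset.mul_sum, ← Finset.sum_add_distrib]
        refine Finset.sum_congr rfl fun p _ => by ring
      calc ∑ p ∈ Tx, a p * g p.2 = c * (∑ p ∈ Tx, a p * p.2) + d * (∑ p ∈ Tx, a p) := by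
            rw [e1, e2]
        _ = c * (∑ p ∈ Tx, b p * p.2) + d * (∑ p ∈ Tx, b p) := by rw [hmean x, hmass x]
        _ = ∑ p ∈ Tx, b p * (c * p.2 + d) := (e2 b).symm
        _ ≤ ∑ p ∈ Tx, b p * g p.2 :=
            Finset.sum_le_sum fun p _ => mul_le_mul_of_nonneg_left (hle p.2) (hb0 p)
    · push_neg at hsupp
      have hz : ∀ p ∈ Tx, a p = 0 := fun p hp => hsupp p hp
      have hbz : ∀ p ∈ Tx, b p = 0 := by
        have h0 : ∑ p ∈ Tx, b p = 0 := by
          rw [← hmass x]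
          exact Finset.sum_eq_zero hz
        intro p hp
        exact (Finset.sum_eq_zero_iff_of_nonneg fun q _ => hb0 q).1 h0 p hp
      rw [Finset.sum_eq_zero fun p hp => by rw [hz p hp]; ring,
        Finset.sum_eq_zero fun p hp => by rw [hbz p hp]; ring]
  -- assemble
  set Tle := T.filter (fun p => p.1 ≤ s) with hTle
  have hAg : ∑ p ∈ Tle, a p * g p.2 ≤ ∑ p ∈ Tle, b p * g p.2 := by
    have key : ∀ c : ℝ × ℝ → ℝ, ∑ p ∈ Tle, c p * g p.2
        = ∑ x ∈ Tle.image Prod.fst, ∑ p ∈ T.filter (fun p => p.1 = x), c p * g p.2 := by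
      intro cfn
      rw [← Finset.sum_fiberwise_of_maps_to (fun p hp => Finset.mem_image_of_mem Prod.fst hp)
        (fun p => cfn p * g p.2)]
      refine Finset.sum_congr rfl fun x hx => ?_
      obtain ⟨p0, hp0, hp0x⟩ := Finset.mem_image.1 hx
      have hxle : x ≤ s := by
        rw [← hp0x]; exact (Finset.mem_filter.1 hp0).2
      congr 1
      rw [hTle, Finset.filter_filter]
      refine Finset.filter_congr fun p _ => ?_
      constructor
      · rintro ⟨-, h⟩; exact h
      · intro h; exact ⟨by rw [h]; exact hxle, h⟩
    rw [key a, key b]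
    refine Finset.sum_le_sum fun x hx => ?_
    obtain ⟨p0, hp0, hp0x⟩ := Finset.mem_image.1 hx
    exact hA x (by rw [← hp0x]; exact (Finset.mem_filter.1 hp0).2)
  -- difference sums
  have hsplit : ∀ c : ℝ × ℝ → ℝ,
      ∑ p ∈ Tle, c p * (g p.2 - f p.2)
        + ∑ p ∈ T.filter (fun p => ¬ p.1 ≤ s), c p * (g p.2 - f p.2)
      = ∑ p ∈ T, c p * (g p.2 - f p.2) := by
    intro c
    exact Finset.sum_filter_add_sum_filter_not T _ _
  have hTdiff : ∑ p ∈ T, a p * (g p.2 - f p.2) = ∑ p ∈ T, b p * (g p.2 - f p.2) := by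
    have h1 : ∀ c : ℝ × ℝ → ℝ, ∑ p ∈ T, c p * (g p.2 - f p.2)
        = ∑ p ∈ T, c p * g p.2 - ∑ p ∈ T, c p * f p.2 := by
      intro c
      rw [← Finset.sum_sub_distrib]
      exact Finset.sum_congr rfl fun p _ => by ring
    rw [h1, h1, hall g, hall f]
  have hagt : ∑ p ∈ T.filter (fun p => ¬ p.1 ≤ s), a p * (g p.2 - f p.2) = 0 := by
    refine Finset.sum_eq_zero fun p hp => ?_
    obtain ⟨hpT, hps⟩ := Finset.mem_filter.1 hp
    by_cases hap : a p = 0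
    · rw [hap]; ring
    · rw [hB p hpT hps hap]; ring
  have hbgt : 0 ≤ ∑ p ∈ T.filter (fun p => ¬ p.1 ≤ s), b p * (g p.2 - f p.2) := by
    refine Finset.sum_nonneg fun p _ => ?_
    exact mul_nonneg (hb0 p) (by linarith [hfg p.2])
  have hkey : ∑ p ∈ Tle, b p * (g p.2 - f p.2) ≤ ∑ p ∈ Tle, a p * (g p.2 - f p.2) := by
    have ha' := hsplit a
    have hb' := hsplit b
    linarith [hTdiff, hagt, hbgt]
  have hfin : ∀ c : ℝ × ℝ → ℝ, ∑ p ∈ Tle, c p * f p.2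
      = ∑ p ∈ Tle, c p * g p.2 - ∑ p ∈ Tle, c p * (g p.2 - f p.2) := by
    intro c
    rw [← Finset.sum_sub_distrib]
    exact Finset.sum_congr rfl fun p _ => by ring
  rw [hfin a, hfin b]
  linarith [hAg, hkey]


open scoped Classical in
/-- For a finite measure `α` concentrated on finitely many points of a left-monotone
set `Γ` and a competitor `α'` of `α`, for every `s` the second marginal of
`α` restricted to `(−∞,s] × ℝ` is dominated in convex order by the second marginal of
`α'` restricted to `(−∞,s] × ℝ`. -/
theorem restriction_snd_convex_order
    (Γ : Set (ℝ × ℝ)) (hΓ : LeftMonotone Γ)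
    (α : Measure (ℝ × ℝ)) [IsFiniteMeasure α]
    (hfin : ∃ S : Finset (ℝ × ℝ), ↑S ⊆ Γ ∧ α ((↑S : Set (ℝ × ℝ))ᶜ) = 0)
    (α' : Measure (ℝ × ℝ)) (hcomp : IsCompetitor α α')
    (s : ℝ) (f : ℝ → ℝ) (hf : ConvexOn ℝ Set.univ f) :
    ∫ p in (Set.Iic s ×ˢ (Set.univ : Set ℝ)), f p.2 ∂α ≤
      ∫ p in (Set.Iic s ×ˢ (Set.univ : Set ℝ)), f p.2 ∂α' := by
  obtain ⟨S, hSΓ, hSnull⟩ := hfin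
  obtain ⟨hfin', hfst, hsndm, hxcond⟩ := hcomp
  haveI : IsFiniteMeasure α' := hfin'
  set X := S.image Prod.fst with hX
  set Y := S.image Prod.snd with hY
  set T := X ×ˢ Y with hTdef
  have hSsubT : (↑S : Set (ℝ × ℝ)) ⊆ ↑T := by
    intro p hp
    exact Finset.mem_coe.2 (Finset.mem_product.2
      ⟨Finset.mem_image_of_mem _ hp, Finset.mem_image_of_mem _ hp⟩)
  have hαT : α ((↑T : Set (ℝ × ℝ))ᶜ) = 0 :=
    measure_mono_null (Set.compl_subset_compl.2 hSsubT) hSnull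
  have hfstX : α' (Prod.fst ⁻¹' (↑X : Set ℝ)ᶜ) = 0 := by
    have h1 : MeasurableSet ((↑X : Set ℝ)ᶜ) := X.measurableSet.compl
    have h2 := congrArg (fun m : Measure ℝ => m ((↑X : Set ℝ)ᶜ)) hfst
    simp only [Measure.map_apply measurable_fst h1] at h2
    rw [h2]
    refine measure_mono_null ?_ hSnull
    intro p hp
    simp only [Set.mem_preimage, Set.mem_compl_iff, Finset.mem_coe] at hp ⊢
    exact fun hc => hp (Finset.mem_image_of_mem _ hc)
  have hsndY : α' (Prod.snd ⁻¹' (↑Y : Set ℝ)ᶜ) = 0 := by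
    have h1 : MeasurableSet ((↑Y : Set ℝ)ᶜ) := Y.measurableSet.compl
    have h2 := congrArg (fun m : Measure ℝ => m ((↑Y : Set ℝ)ᶜ)) hsndm
    simp only [Measure.map_apply measurable_snd h1] at h2
    rw [h2]
    refine measure_mono_null ?_ hSnull
    intro p hp
    simp only [Set.mem_preimage, Set.mem_compl_iff, Finset.mem_coe] at hp ⊢
    exact fun hc => hp (Finset.mem_image_of_mem _ hc)
  have hα'T : α' ((↑T : Set (ℝ × ℝ))ᶜ) = 0 := by
    refine measure_mono_null ?_ (measure_union_null hfstX hsndY)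
    intro p hp
    simp only [Set.mem_compl_iff, Finset.mem_coe, hTdef, Finset.mem_product] at hp
    by_cases h1 : p.1 ∈ X
    · by_cases h2 : p.2 ∈ Y
      · exact absurd ⟨h1, h2⟩ hp
      · exact Or.inr h2
    · exact Or.inl h1
  set a : ℝ × ℝ → ℝ := fun p => (α {p}).toReal with hadef
  set b : ℝ × ℝ → ℝ := fun p => (α' {p}).toReal with hbdef
  have hmass : ∀ x : ℝ, ∑ p ∈ T.filter (fun p => p.1 = x), a p
      = ∑ p ∈ T.filter (fun p => p.1 = x), b p := by
    intro x
    have hEm : MeasurableSet ({x} ×ˢ (Set.univ : Set ℝ)) :=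
      (measurableSet_singleton x).prod MeasurableSet.univ
    have hxc := (hxcond x).1
    rw [measure_eq_sum_of_concentrated α T hαT hEm (fun p => p.1 = x)
        (fun p => by
        simp only [Set.mem_prod, Set.mem_singleton_iff, Set.mem_univ, and_true]),
      measure_eq_sum_of_concentrated α' T hα'T hEm (fun p => p.1 = x)
        (fun p => by
        simp only [Set.mem_prod, Set.mem_singleton_iff, Set.mem_univ, and_true])] at hxc
    have := congrArg ENNReal.toReal hxc
    rwa [ENNReal.toReal_sum (fun p _ => measure_ne_top α _),
      ENNReal.toReal_sum (fun p _ => measure_ne_top α' _)] at this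
  have hmean : ∀ x : ℝ, ∑ p ∈ T.filter (fun p => p.1 = x), a p * p.2
      = ∑ p ∈ T.filter (fun p => p.1 = x), b p * p.2 := by
    intro x
    have hEm : MeasurableSet ({x} ×ˢ (Set.univ : Set ℝ)) :=
      (measurableSet_singleton x).prod MeasurableSet.univ
    have hxc := (hxcond x).2
    rwa [setIntegral_eq_sum_of_concentrated α T hαT hEm (fun p => p.2) (fun p => p.1 = x)
        (fun p => by
        simp only [Set.mem_prod, Set.mem_singleton_iff, Set.mem_univ, and_true]),
      setIntegral_eq_sum_of_concentrated α' T hα'T hEm (fun p => p.2) (fun p => p.1 = x)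
        (fun p => by
        simp only [Set.mem_prod, Set.mem_singleton_iff, Set.mem_univ, and_true])] at hxc
  have hsnd : ∀ y : ℝ, ∑ p ∈ T.filter (fun p => p.2 = y), a p
      = ∑ p ∈ T.filter (fun p => p.2 = y), b p := by
    intro y
    have hEm : MeasurableSet (Prod.snd ⁻¹' ({y} : Set ℝ) : Set (ℝ × ℝ)) :=
      measurable_snd (measurableSet_singleton y)
    have h2 := congrArg (fun m : Measure ℝ => m ({y} : Set ℝ)) hsndm
    simp only [Measure.map_apply measurable_snd (measurableSet_singleton y)] at h2
    rw [measure_eq_sum_of_concentrated α T hαT hEm (fun p => p.2 = y)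
        (fun p => by simp),
      measure_eq_sum_of_concentrated α' T hα'T hEm (fun p => p.2 = y)
        (fun p => by simp)] at h2
    have := congrArg ENNReal.toReal h2
    rw [ENNReal.toReal_sum (fun p _ => measure_ne_top α _),
      ENNReal.toReal_sum (fun p _ => measure_ne_top α' _)] at this
    exact this.symm
  have haΓ : ∀ p ∈ T, a p ≠ 0 → p ∈ Γ := by
    intro p _ hap
    have hne : α {p} ≠ 0 := by
      intro h
      exact hap (by rw [hadef]; simp [h])
    have hpS : p ∈ S := by
      by_contra h
      exact hne (measure_mono_null (Set.singleton_subset_iff.2 h) hSnull)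
    exact hSΓ hpS
  have hAm : MeasurableSet (Set.Iic s ×ˢ (Set.univ : Set ℝ)) :=
    measurableSet_Iic.prod MeasurableSet.univ
  rw [setIntegral_eq_sum_of_concentrated α T hαT hAm (fun p => f p.2) (fun p => p.1 ≤ s)
      (fun p => by simp [Set.mem_prod]),
    setIntegral_eq_sum_of_concentrated α' T hα'T hAm (fun p => f p.2) (fun p => p.1 ≤ s)
      (fun p => by simp [Set.mem_prod])]
  exact core_sum_ineq Γ hΓ T a b (fun p => ENNReal.toReal_nonneg)
    (fun p => ENNReal.toReal_nonneg) haΓ hmass hmean hsnd s f hf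

end Auxiliary
end
end

section
/- Let β and β' be finitely supported nonnegative finite measures on ℝ with equal total mass β(ℝ) = β'(ℝ) and equal barycenters ∫ y dβ(y) = ∫ y dβ'(y). Suppose β is concentrated on the closed interval [a,b] and β'({y}) ≤ β({y}) for every y in the open interval (a,b). Then β ≤_cx β', i.e. ∫ f dβ ≤ ∫ f dβ' for every convex function f: ℝ → ℝ. -/
open MeasureTheory Set ENNReal

noncomputable section

lemma meas_eq_sum_dirac (μ : Measure ℝ) (S : Finset ℝ) (h : μ ((↑S : Set ℝ)ᶜ) = 0) :
    μ = ∑ y ∈ S, μ {y} • Measure.dirac y := by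
  ext s hs
  have h1 : μ (s \ ↑S) = 0 := measure_mono_null (fun x hx => hx.2) h
  have h2 : μ s = μ (s ∩ ↑S) := by
    rw [← measure_inter_add_diff s S.measurableSet, h1, add_zero]
  have h3 : s ∩ ↑S = ⋃ y ∈ S, ({y} ∩ s) := by
    ext x
    simp only [Set.mem_inter_iff, Finset.mem_coe, Set.mem_iUnion, Set.mem_singleton_iff]
    constructor
    · rintro ⟨hxs, hxS⟩; exact ⟨x, hxS, rfl, hxs⟩
    · rintro ⟨y, hyS, rfl, hxs⟩; exact ⟨hxs, hyS⟩
  have h4 : μ (⋃ y ∈ S, ({y} ∩ s)) = ∑ y ∈ S, μ ({y} ∩ s) := by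
    apply measure_biUnion_finset
    · intro x _ y _ hxy
      apply Set.disjoint_left.2
      intro z hz hz'
      exact hxy (by rw [← hz.1, ← hz'.1])
    · exact fun y _ => (measurableSet_singleton y).inter hs
  rw [h2, h3, h4, Measure.finset_sum_apply]
  apply Finset.sum_congr rfl
  intro y _
  rw [Measure.smul_apply, Measure.dirac_apply' y hs, smul_eq_mul]
  by_cases hy : y ∈ s
  · rw [Set.inter_eq_self_of_subset_left (Set.singleton_subset_iff.2 hy),
      Set.indicator_of_mem hy, Pi.one_apply, mul_one]
  · rw [Set.singleton_inter_eq_empty.2 hy, Set.indicator_of_notMem hy, mul_zero,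
      measure_empty]

lemma integral_eq_sum_pts (μ : Measure ℝ) [IsFiniteMeasure μ] (S : Finset ℝ)
    (h : μ ((↑S : Set ℝ)ᶜ) = 0) (g : ℝ → ℝ) :
    ∫ y, g y ∂μ = ∑ y ∈ S, (μ {y}).toReal * g y := by
  have hrep := meas_eq_sum_dirac μ S h
  have hint : ∀ i ∈ S, Integrable g (μ {i} • Measure.dirac i) := by
    intro i _
    have hd : Integrable g (Measure.dirac i) :=
      (integrable_const (g i)).congr (ae_eq_dirac g).symm
    exact hd.smul_measure (measure_ne_top μ {i})
  conv_lhs => rw [hrep]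
  rw [integral_finset_sum_measure hint]
  apply Finset.sum_congr rfl
  intro y _
  rw [integral_smul_measure, integral_dirac, smul_eq_mul]

/-- Existence of a suitable affine function: below `f` outside `(a,b)`, above `f` on `[a,b]`,
equal to `f` at `a` and `b`. -/
lemma exists_affine_line (f : ℝ → ℝ) (hf : ConvexOn ℝ Set.univ f) (a b : ℝ) (hab : a ≤ b) :
    ∃ c d : ℝ, (∀ y ∈ Set.Icc a b, f y ≤ c * y + d) ∧
      (∀ y, y ∉ Set.Ioo a b → c * y + d ≤ f y) ∧
      f a = c * a + d ∧ f b = c * b + d := by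
  rcases eq_or_lt_of_le hab with rfl | hlt
  · -- supporting line at a
    set T : Set ℝ := {s : ℝ | ∃ y, a < y ∧ s = (f y - f a) / (y - a)} with hT
    have hne : T.Nonempty := ⟨(f (a + 1) - f a) / (a + 1 - a), a + 1, by linarith, rfl⟩
    have hbdd : BddBelow T := by
      refine ⟨(f (a - 1) - f a) / (a - 1 - a), ?_⟩
      rintro s ⟨y, hy, rfl⟩
      exact hf.secant_mono (mem_univ a) (mem_univ (a - 1)) (mem_univ y)
        (by linarith) (by linarith) (by linarith)
    set c := sInf T with hc
    have hright : ∀ y, a < y → c ≤ (f y - f a) / (y - a) := fun y hy =>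
      csInf_le hbdd ⟨y, hy, rfl⟩
    have hleft : ∀ y, y < a → (f y - f a) / (y - a) ≤ c := by
      intro y hy
      apply le_csInf hne
      rintro s ⟨z, hz, rfl⟩
      exact hf.secant_mono (mem_univ a) (mem_univ y) (mem_univ z)
        (by linarith) (by linarith) (by linarith)
    have key : ∀ y, c * y + (f a - c * a) ≤ f y := by
      intro y
      rcases lt_trichotomy y a with hy | rfl | hy
      · have h1 := hleft y hy
        rw [show (f y - f a) / (y - a) = (f a - f y) / (a - y) by
          rw [← neg_sub (f y) (f a), ← neg_sub y a, neg_div_neg_eq]] at h1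
        rw [div_le_iff₀ (by linarith : (0:ℝ) < a - y)] at h1
        nlinarith
      · linarith
      · have h1 := hright y hy
        rw [le_div_iff₀ (by linarith : (0:ℝ) < y - a)] at h1
        nlinarith
    refine ⟨c, f a - c * a, ?_, fun y _ => key y, by ring, by ring⟩
    intro y hy
    have hya : y = a := le_antisymm hy.2 hy.1
    subst hya
    linarith
  · -- secant line
    have hba : (0:ℝ) < b - a := by linarith
    have hbane : b - a ≠ 0 := ne_of_gt hba
    set c := (f b - f a) / (b - a) with hc
    have hc2 : c * (b - a) = f b - f a := by
      rw [hc]; field_simp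
    have hLb : f b = c * b + (f a - c * a) := by nlinarith [hc2]
    refine ⟨c, f a - c * a, ?_, ?_, by ring, hLb⟩
    · intro y hy
      rcases eq_or_lt_of_le hy.1 with rfl | h1
      · linarith
      · rcases eq_or_lt_of_le hy.2 with rfl | h2
        · linarith [hLb]
        · have h3 := hf.secant_mono (mem_univ a) (mem_univ y) (mem_univ b)
            (by linarith) (by linarith) hy.2
          rw [← hc, div_le_iff₀ (by linarith : (0:ℝ) < y - a)] at h3
          nlinarith
    · intro y hy
      rw [Set.mem_Ioo, not_and_or, not_lt, not_lt] at hy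
      rcases hy with hy | hy
      · rcases eq_or_lt_of_le hy with rfl | hy'
        · linarith
        · have h3 := hf.secant_mono (mem_univ a) (mem_univ y) (mem_univ b)
            (by linarith) (by linarith) (by linarith)
          rw [← hc, show (f y - f a) / (y - a) = (f a - f y) / (a - y) by
            rw [← neg_sub (f y) (f a), ← neg_sub y a, neg_div_neg_eq],
            div_le_iff₀ (by linarith : (0:ℝ) < a - y)] at h3
          nlinarith
      · rcases eq_or_lt_of_le hy with rfl | hy'
        · linarith [hLb]
        · have h3 := hf.secant_mono (mem_univ a) (mem_univ b) (mem_univ y)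
            (by linarith) (by linarith) (by linarith)
          rw [← hc, le_div_iff₀ (by linarith : (0:ℝ) < y - a)] at h3
          have : c * (b - a) = f b - f a := hc2
          nlinarith

/-- Let `β` and `β'` be finitely supported finite measures on `ℝ` with equal total mass
and equal barycenters, with `β` concentrated on `[a,b]` and `β'({y}) ≤ β({y})` for all
`y ∈ (a,b)`. Then `β ≤_cx β'`: `∫ f dβ ≤ ∫ f dβ'` for every convex `f : ℝ → ℝ`. -/
theorem convex_order_of_pointwise_domination
    (β β' : Measure ℝ) [IsFiniteMeasure β] [IsFiniteMeasure β']
    (hβfin : ∃ S : Finset ℝ, β ((↑S : Set ℝ)ᶜ) = 0)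
    (hβ'fin : ∃ S : Finset ℝ, β' ((↑S : Set ℝ)ᶜ) = 0)
    (hmass : β Set.univ = β' Set.univ)
    (hbary : ∫ y, y ∂β = ∫ y, y ∂β')
    (a b : ℝ) (hconc : β ((Set.Icc a b)ᶜ) = 0)
    (hdom : ∀ y ∈ Set.Ioo a b, β' {y} ≤ β {y}) :
    ∀ f : ℝ → ℝ, ConvexOn ℝ Set.univ f → ∫ y, f y ∂β ≤ ∫ y, f y ∂β' := by
  intro f hf
  obtain ⟨S₁, hS₁⟩ := hβfin
  obtain ⟨S₂, hS₂⟩ := hβ'fin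
  set S : Finset ℝ := S₁ ∪ S₂ with hSdef
  have hβS : β ((↑S : Set ℝ)ᶜ) = 0 :=
    measure_mono_null (compl_subset_compl.2 (Finset.coe_subset.2 Finset.subset_union_left)) hS₁
  have hβ'S : β' ((↑S : Set ℝ)ᶜ) = 0 :=
    measure_mono_null (compl_subset_compl.2 (Finset.coe_subset.2 Finset.subset_union_right)) hS₂
  rw [integral_eq_sum_pts β S hβS f, integral_eq_sum_pts β' S hβ'S f]
  set w : ℝ → ℝ := fun y => (β {y}).toReal with hw
  set w' : ℝ → ℝ := fun y => (β' {y}).toReal with hw'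
  -- equal masses as sums
  have hmass' : ∑ y ∈ S, w y = ∑ y ∈ S, w' y := by
    have h1 : (β Set.univ).toReal = ∑ y ∈ S, w y := by
      simpa [hw, Measure.real] using integral_eq_sum_pts β S hβS (fun _ => (1 : ℝ))
    have h2 : (β' Set.univ).toReal = ∑ y ∈ S, w' y := by
      simpa [hw', Measure.real] using integral_eq_sum_pts β' S hβ'S (fun _ => (1 : ℝ))
    rw [← h1, ← h2, hmass]
  have hbary' : ∑ y ∈ S, w y * y = ∑ y ∈ S, w' y * y := by
    have h1 := integral_eq_sum_pts β S hβS (fun y => y)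
    have h2 := integral_eq_sum_pts β' S hβ'S (fun y => y)
    rw [← h1, ← h2, hbary]
  have hwzero : ∀ y, y ∉ Set.Icc a b → w y = 0 := by
    intro y hy
    have h0 : β {y} = 0 := measure_mono_null (Set.singleton_subset_iff.2 hy) hconc
    simp [hw, h0]
  by_cases hab : a ≤ b
  · obtain ⟨c, d, hL1, hL2, hLa, hLb⟩ := exists_affine_line f hf a b hab
    have key : ∀ y ∈ S, (w y - w' y) * f y ≤ (w y - w' y) * (c * y + d) := by
      intro y _
      by_cases hy : y ∈ Set.Ioo a b
      · have hd0 : 0 ≤ w y - w' y := by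
          rw [sub_nonneg]
          exact ENNReal.toReal_mono (measure_ne_top β {y}) (hdom y hy)
        exact mul_le_mul_of_nonneg_left (hL1 y (Set.Ioo_subset_Icc_self hy)) hd0
      · by_cases hy2 : y ∈ Set.Icc a b
        · have hyab : y = a ∨ y = b := by
            rcases eq_or_lt_of_le hy2.1 with rfl | h1
            · exact Or.inl rfl
            · rcases eq_or_lt_of_le hy2.2 with rfl | h2
              · exact Or.inr rfl
              · exact absurd ⟨h1, h2⟩ hy
          rcases hyab with rfl | rfl
          · rw [← hLa]
          · rw [← hLb]
        · have hwy : w y = 0 := hwzero y hy2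
          have hd0 : w y - w' y ≤ 0 := by
            rw [hwy, zero_sub, neg_nonpos]
            exact ENNReal.toReal_nonneg
          exact mul_le_mul_of_nonpos_left (hL2 y hy) hd0
    have hsum : ∑ y ∈ S, (w y - w' y) * f y ≤ ∑ y ∈ S, (w y - w' y) * (c * y + d) :=
      Finset.sum_le_sum key
    have hzero : ∑ y ∈ S, (w y - w' y) * (c * y + d) = 0 := by
      have he : ∑ y ∈ S, (w y - w' y) * (c * y + d)
          = c * ((∑ y ∈ S, w y * y) - ∑ y ∈ S, w' y * y)
            + d * ((∑ y ∈ S, w y) - ∑ y ∈ S, w' y) := by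
        rw [← Finset.sum_sub_distrib, ← Finset.sum_sub_distrib, Finset.mul_sum,
          Finset.mul_sum, ← Finset.sum_add_distrib]
        apply Finset.sum_congr rfl
        intros; ring
      rw [he, hbary', hmass', sub_self, sub_self, mul_zero, mul_zero, add_zero]
    have hsplit : ∑ y ∈ S, (w y - w' y) * f y
        = (∑ y ∈ S, w y * f y) - ∑ y ∈ S, w' y * f y := by
      rw [← Finset.sum_sub_distrib]
      apply Finset.sum_congr rfl
      intros; ring
    linarith [hsplit ▸ (hzero ▸ hsum)]
  · -- degenerate case: [a,b] is empty, so both measures vanish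
    have hw0 : ∀ y ∈ S, w y = 0 := by
      intro y _
      apply hwzero
      rw [Set.Icc_eq_empty hab]
      exact Set.notMem_empty y
    have hsum0 : ∑ y ∈ S, w' y = 0 := by
      rw [← hmass']
      exact Finset.sum_eq_zero hw0
    have hw'0 : ∀ y ∈ S, w' y = 0 := by
      intro y hy
      have := (Finset.sum_eq_zero_iff_of_nonneg
        (fun i _ => ENNReal.toReal_nonneg)).1 hsum0
      exact this y hy
    rw [Finset.sum_eq_zero fun y hy =>
        by rw [show (β {y}).toReal = 0 from hw0 y hy, zero_mul],
      Finset.sum_eq_zero fun y hy =>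
        by rw [show (β' {y}).toReal = 0 from hw'0 y hy, zero_mul]]
end
end

section
/- Let β and β' be finite measures on ℝ with finite first moments, equal total mass β(ℝ) = β'(ℝ) and equal barycenters ∫ y dβ(y) = ∫ y dβ'(y). If ∫ |y−t| dβ(y) ≤ ∫ |y−t| dβ'(y) for every t ∈ ℝ, then β ≤_cx β', i.e. ∫ f dβ ≤ ∫ f dβ' for every convex function f: ℝ → ℝ for which both integrals exist. Thus the family of functions y ↦ |y−t|, t ∈ ℝ, suffices to describe the convex order of measures on ℝ. -/
open MeasureTheory Set ENNReal

open Filter Topology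

noncomputable section

namespace ConvexOrderAux

/-- Iterated pointwise maximum of a sequence of functions. -/
def maxRec (ℓ : ℕ → ℝ → ℝ) : ℕ → ℝ → ℝ
  | 0 => ℓ 0
  | k + 1 => fun y => max (maxRec ℓ k y) (ℓ (k + 1) y)

lemma maxRec_zero (ℓ : ℕ → ℝ → ℝ) : maxRec ℓ 0 = ℓ 0 := rfl

lemma maxRec_succ (ℓ : ℕ → ℝ → ℝ) (k : ℕ) :
    maxRec ℓ (k + 1) = fun y => max (maxRec ℓ k y) (ℓ (k + 1) y) := rfl

lemma le_maxRec (ℓ : ℕ → ℝ → ℝ) (k i : ℕ) (hi : i ≤ k) : ∀ y, ℓ i y ≤ maxRec ℓ k y := by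
  induction k with
  | zero =>
    obtain rfl : i = 0 := Nat.le_zero.mp hi
    intro y; exact le_rfl
  | succ k ih =>
    intro y
    by_cases h : i ≤ k
    · exact (ih h y).trans (le_max_left _ _)
    · obtain rfl : i = k + 1 := by omega
      exact le_max_right _ _

lemma maxRec_le (ℓ : ℕ → ℝ → ℝ) (g : ℝ → ℝ) (k : ℕ)
    (h : ∀ i, i ≤ k → ∀ y, ℓ i y ≤ g y) : ∀ y, maxRec ℓ k y ≤ g y := by
  induction k with
  | zero => intro y; exact h 0 le_rfl y
  | succ k ih =>
    intro y
    exact max_le (ih (fun i hi => h i (hi.trans (Nat.le_succ k))) y) (h (k + 1) le_rfl y)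

variable {f : ℝ → ℝ}

lemma slope3 (hf : ConvexOn ℝ Set.univ f) {x y z : ℝ} (h1 : x < y) (h2 : y < z) :
    (f y - f x) / (y - x) ≤ (f z - f y) / (z - y) :=
  hf.slope_mono_adjacent (Set.mem_univ x) (Set.mem_univ z) h1 h2

lemma slopeL (hf : ConvexOn ℝ Set.univ f) {w a b : ℝ} (hwa : w < a) (hab : a < b) :
    (f a - f w) / (a - w) ≤ (f b - f w) / (b - w) := by
  have h := slope3 hf hwa hab
  rw [div_le_div_iff₀ (by linarith) (by linarith)] at h ⊢
  nlinarith [h]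

/-- A choice of subgradient for a convex function on `ℝ`: infimum of slopes to the right. -/
def subgrad (f : ℝ → ℝ) (t : ℝ) : ℝ :=
  sInf ((fun u => (f u - f t) / (u - t)) '' Set.Ioi t)

lemma subgrad_le_slope (hf : ConvexOn ℝ Set.univ f) {t u : ℝ} (h : t < u) :
    subgrad f t ≤ (f u - f t) / (u - t) := by
  apply csInf_le
  · refine ⟨(f t - f (t - 1)) / (t - (t - 1)), ?_⟩
    rintro x ⟨v, hv, rfl⟩
    exact slope3 hf (by linarith) (Set.mem_Ioi.mp hv)
  · exact ⟨u, Set.mem_Ioi.mpr h, rfl⟩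

lemma slope_le_subgrad (hf : ConvexOn ℝ Set.univ f) {w t : ℝ} (h : w < t) :
    (f t - f w) / (t - w) ≤ subgrad f t := by
  apply le_csInf (Set.Nonempty.image _ Set.nonempty_Ioi)
  rintro x ⟨v, hv, rfl⟩
  exact slope3 hf h (Set.mem_Ioi.mp hv)

lemma subgrad_mono (hf : ConvexOn ℝ Set.univ f) {a b : ℝ} (h : a < b) :
    subgrad f a ≤ subgrad f b :=
  (subgrad_le_slope hf h).trans (slope_le_subgrad hf h)

/-- The supporting line of `f` at `t`. -/
def lineAt (f : ℝ → ℝ) (t : ℝ) : ℝ → ℝ := fun y => f t + subgrad f t * (y - t)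

lemma lineAt_le (hf : ConvexOn ℝ Set.univ f) (t y : ℝ) : lineAt f t y ≤ f y := by
  rcases lt_trichotomy y t with h | h | h
  · have h1 := slope_le_subgrad hf h
    rw [div_le_iff₀ (by linarith)] at h1
    unfold lineAt
    nlinarith [h1]
  · subst h; simp [lineAt]
  · have h1 := subgrad_le_slope hf h
    rw [le_div_iff₀ (by linarith)] at h1
    unfold lineAt
    nlinarith [h1]

lemma lineAt_self (f : ℝ → ℝ) (t : ℝ) : lineAt f t t = f t := by simp [lineAt]

lemma lineAt_eq_of_subgrad_eq (hf : ConvexOn ℝ Set.univ f) {a b : ℝ} (hab : a < b)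
    (he : subgrad f a = subgrad f b) : ∀ y, lineAt f b y = lineAt f a y := by
  intro y
  have h1 := subgrad_le_slope hf hab
  have h2 := slope_le_subgrad hf hab
  have h3 : (f b - f a) / (b - a) = subgrad f b := le_antisymm h2 (he ▸ h1)
  have h4 : f b - f a = subgrad f b * (b - a) := by
    rw [div_eq_iff (by intro hc; rw [sub_eq_zero] at hc; exact absurd hc.symm hab.ne)] at h3
    exact h3
  unfold lineAt
  linear_combination h4 - (y - a) * he

lemma crossing (hf : ConvexOn ℝ Set.univ f) {a b : ℝ} (hab : a < b)
    (hlt : subgrad f a < subgrad f b) :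
    ∃ s : ℝ, a ≤ s ∧ s ≤ b ∧
      ∀ y, lineAt f b y = lineAt f a y + (subgrad f b - subgrad f a) * (y - s) := by
  have hc : subgrad f a - subgrad f b ≠ 0 := by
    intro h; rw [sub_eq_zero] at h; exact absurd h (ne_of_lt hlt)
  set s := (f b - subgrad f b * b - f a + subgrad f a * a) / (subgrad f a - subgrad f b) with hs
  have hsc : s * (subgrad f a - subgrad f b)
      = f b - subgrad f b * b - f a + subgrad f a * a := div_mul_cancel₀ _ hc
  have hline : ∀ y, lineAt f b y = lineAt f a y + (subgrad f b - subgrad f a) * (y - s) := by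
    intro y
    unfold lineAt
    linear_combination -hsc
  refine ⟨s, ?_, ?_, hline⟩
  · by_contra hcon
    push_neg at hcon
    have h1 := lineAt_le hf b a
    have h2 := hline a
    have h3 : lineAt f a a = f a := lineAt_self f a
    nlinarith [mul_pos (sub_pos.mpr hlt) (sub_pos.mpr hcon)]
  · by_contra hcon
    push_neg at hcon
    have h1 := lineAt_le hf a b
    have h2 := hline b
    have h3 : lineAt f b b = f b := lineAt_self f b
    nlinarith [mul_pos (sub_pos.mpr hlt) (sub_pos.mpr hcon)]

/-- Grid points at level `n`. -/
def gridPt (n i : ℕ) : ℝ := ((i : ℝ) - 4 ^ n) / 2 ^ n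

lemma gridPt_lt_succ (n i : ℕ) : gridPt n i < gridPt n (i + 1) := by
  unfold gridPt
  have h2 : (0:ℝ) < 2 ^ n := by positivity
  rw [div_lt_div_iff₀ h2 h2]
  push_cast
  nlinarith

lemma gridPt_refine (n i : ℕ) : gridPt n i = gridPt (n + 1) (2 * i + 2 * 4 ^ n) := by
  unfold gridPt
  rw [div_eq_div_iff (by positivity) (by positivity)]
  push_cast
  ring

end ConvexOrderAux

end

section

open ConvexOrderAux

set_option maxHeartbeats 2000000 in
/-- The functions `y ↦ |y − t|`, `t ∈ ℝ`, suffice to describe the convex order: if `β`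
and `β'` are finite measures on `ℝ` with finite first moments, equal total mass and
equal barycenters, and `∫ |y − t| dβ ≤ ∫ |y − t| dβ'` for all `t`, then `β ≤_cx β'`,
i.e. `∫ f dβ ≤ ∫ f dβ'` for every convex `f` for which both integrals exist. -/
theorem convex_order_of_call_functions
    (β β' : Measure ℝ) [IsFiniteMeasure β] [IsFiniteMeasure β']
    (hmom : Integrable (fun y => |y|) β) (hmom' : Integrable (fun y => |y|) β')
    (hmass : β Set.univ = β' Set.univ)
    (hbary : ∫ y, y ∂β = ∫ y, y ∂β')
    (hcall : ∀ t : ℝ, ∫ y, |y - t| ∂β ≤ ∫ y, |y - t| ∂β') :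
    ∀ f : ℝ → ℝ, ConvexOn ℝ Set.univ f → Integrable f β → Integrable f β' →
      ∫ y, f y ∂β ≤ ∫ y, f y ∂β' := by
  intro f hf hfβ hfβ'
  -- basic integrability facts
  have hid : Integrable (fun y : ℝ => y) β :=
    hmom.mono' measurable_id.aestronglyMeasurable
      (Filter.Eventually.of_forall fun y => by simp [Real.norm_eq_abs])
  have hid' : Integrable (fun y : ℝ => y) β' :=
    hmom'.mono' measurable_id.aestronglyMeasurable
      (Filter.Eventually.of_forall fun y => by simp [Real.norm_eq_abs])
  have hmassR : β.real Set.univ = β'.real Set.univ := by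
    show (β Set.univ).toReal = (β' Set.univ).toReal; rw [hmass]
  have hsubint : ∀ t : ℝ, Integrable (fun y => y - t) β := fun t => hid.sub (integrable_const t)
  have hsubint' : ∀ t : ℝ, Integrable (fun y => y - t) β' := fun t => hid'.sub (integrable_const t)
  have hposint : ∀ t : ℝ, Integrable (fun y => max (y - t) 0) β := fun t => (hsubint t).pos_part
  have hposint' : ∀ t : ℝ, Integrable (fun y => max (y - t) 0) β' := fun t => (hsubint' t).pos_part
  -- the integral of `y - t` is the same for both measures
  have hsubeq : ∀ t : ℝ, ∫ y, (y - t) ∂β = ∫ y, (y - t) ∂β' := by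
    intro t
    rw [integral_sub hid (integrable_const t), integral_sub hid' (integrable_const t),
      integral_const, integral_const, hbary, hmassR]
  -- the call inequality
  have hposle : ∀ t : ℝ, ∫ y, max (y - t) 0 ∂β ≤ ∫ y, max (y - t) 0 ∂β' := by
    intro t
    have habs : ∀ y : ℝ, max (y - t) 0 = (|y - t| + (y - t)) / 2 := by
      intro y
      rcases le_total (y - t) 0 with h | h
      · rw [max_eq_right h, abs_of_nonpos h]; ring
      · rw [max_eq_left h, abs_of_nonneg h]; ring
    have habsint : Integrable (fun y => |y - t|) β := (hsubint t).abs
    have habsint' : Integrable (fun y => |y - t|) β' := (hsubint' t).abs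
    calc ∫ y, max (y - t) 0 ∂β = ∫ y, (|y - t| + (y - t)) / 2 ∂β := by simp_rw [habs]
    _ = ((∫ y, |y - t| ∂β) + ∫ y, (y - t) ∂β) / 2 := by
        rw [integral_div, integral_add habsint (hsubint t)]
    _ ≤ ((∫ y, |y - t| ∂β') + ∫ y, (y - t) ∂β') / 2 := by
        have h1 := hcall t
        have h2 := hsubeq t
        linarith
    _ = ∫ y, max (y - t) 0 ∂β' := by
        rw [← integral_add habsint' (hsubint' t), ← integral_div]
        simp_rw [habs]
  -- supporting lines are integrable and have equal integrals
  have hlineint : ∀ t : ℝ, Integrable (lineAt f t) β := by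
    intro t
    show Integrable (fun y => f t + subgrad f t * (y - t)) β
    exact (integrable_const _).add ((hsubint t).const_mul _)
  have hlineint' : ∀ t : ℝ, Integrable (lineAt f t) β' := by
    intro t
    show Integrable (fun y => f t + subgrad f t * (y - t)) β'
    exact (integrable_const _).add ((hsubint' t).const_mul _)
  have hlineeq : ∀ t : ℝ, ∫ y, lineAt f t y ∂β = ∫ y, lineAt f t y ∂β' := by
    intro t
    show (∫ y, (f t + subgrad f t * (y - t)) ∂β) = ∫ y, (f t + subgrad f t * (y - t)) ∂β'
    rw [integral_add (integrable_const _) ((hsubint t).const_mul _),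
      integral_add (integrable_const _) ((hsubint' t).const_mul _),
      integral_const, integral_const, hmassR, integral_const_mul, integral_const_mul, hsubeq]
  -- the main induction along each grid level
  have main : ∀ n k : ℕ,
      Integrable (maxRec (fun i => lineAt f (gridPt n i)) k) β ∧
      Integrable (maxRec (fun i => lineAt f (gridPt n i)) k) β' ∧
      (∫ y, maxRec (fun i => lineAt f (gridPt n i)) k y ∂β
        ≤ ∫ y, maxRec (fun i => lineAt f (gridPt n i)) k y ∂β') ∧
      (∀ y, gridPt n k ≤ y →
        maxRec (fun i => lineAt f (gridPt n i)) k y = lineAt f (gridPt n k) y) := by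
    intro n k
    induction k with
    | zero =>
      refine ⟨?_, ?_, ?_, fun y _ => rfl⟩
      · rw [maxRec_zero]; exact hlineint _
      · rw [maxRec_zero]; exact hlineint' _
      · rw [maxRec_zero]; exact le_of_eq (hlineeq _)
    | succ k ih =>
      obtain ⟨ih1, ih2, ih3, ih4⟩ := ih
      have hptk := gridPt_lt_succ n k
      have hd := subgrad_mono hf hptk
      rcases eq_or_lt_of_le hd with he | hlt
      · -- equal slopes: the new supporting line coincides with the previous one
        have hLeq := lineAt_eq_of_subgrad_eq hf hptk he
        have heq : maxRec (fun i => lineAt f (gridPt n i)) (k + 1)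
            = maxRec (fun i => lineAt f (gridPt n i)) k := by
          funext y
          simp only [maxRec_succ]
          apply max_eq_left
          exact (hLeq y).le.trans (le_maxRec (fun i => lineAt f (gridPt n i)) k k le_rfl y)
        refine ⟨by rw [heq]; exact ih1, by rw [heq]; exact ih2, by rw [heq]; exact ih3,
          fun y hy => ?_⟩
        rw [heq, ih4 y ((le_of_lt hptk).trans hy)]
        exact (hLeq y).symm
      · -- strictly increasing slope: add a positive multiple of a call function
        obtain ⟨s, hs1, hs2, hline⟩ := crossing hf hptk hlt
        set c := subgrad f (gridPt n (k + 1)) - subgrad f (gridPt n k) with hc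
        have hcpos : 0 < c := sub_pos.mpr hlt
        have hident : maxRec (fun i => lineAt f (gridPt n i)) (k + 1)
            = fun y => maxRec (fun i => lineAt f (gridPt n i)) k y + c * max (y - s) 0 := by
          funext y
          simp only [maxRec_succ]
          rcases le_total y s with hy | hy
          · rw [max_eq_right (by linarith : y - s ≤ 0), mul_zero, add_zero]
            apply max_eq_left
            have h1 := hline y
            have h2 : lineAt f (gridPt n k) y
                ≤ maxRec (fun i => lineAt f (gridPt n i)) k y :=
                le_maxRec (fun i => lineAt f (gridPt n i)) k k le_rfl y
            have h3 : c * (y - s) ≤ 0 :=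
              mul_nonpos_of_nonneg_of_nonpos hcpos.le (by linarith)
            linarith
          · have h0 : maxRec (fun i => lineAt f (gridPt n i)) k y
                = lineAt f (gridPt n k) y := ih4 y (hs1.trans hy)
            have h1 := hline y
            have h3 : max (y - s) 0 = y - s := max_eq_left (by linarith)
            rw [h3, h0, h1]
            have h2 : 0 ≤ c * (y - s) := mul_nonneg hcpos.le (by linarith)
            exact max_eq_right (by linarith)
        have hint1 : Integrable (maxRec (fun i => lineAt f (gridPt n i)) (k + 1)) β := by
          rw [hident]; exact ih1.add ((hposint s).const_mul c)
        have hint2 : Integrable (maxRec (fun i => lineAt f (gridPt n i)) (k + 1)) β' := by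
          rw [hident]; exact ih2.add ((hposint' s).const_mul c)
        refine ⟨hint1, hint2, ?_, fun y hy => ?_⟩
        · rw [hident]
          rw [integral_add ih1 ((hposint s).const_mul c),
            integral_add ih2 ((hposint' s).const_mul c), integral_const_mul, integral_const_mul]
          exact add_le_add ih3 (mul_le_mul_of_nonneg_left (hposle s) hcpos.le)
        · have hsy : s ≤ y := hs2.trans hy
          have hthis := congrFun hident y
          rw [hthis, ih4 y (hs1.trans hsy), max_eq_left (by linarith : (0:ℝ) ≤ y - s)]
          have h1 := hline y
          linarith
  -- monotonicity of the approximating sequence in `n`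
  have hstep : ∀ n y, maxRec (fun i => lineAt f (gridPt n i)) (2 * 4 ^ n) y
      ≤ maxRec (fun i => lineAt f (gridPt (n + 1) i)) (2 * 4 ^ (n + 1)) y := by
    intro n
    apply maxRec_le
    intro i hi y
    rw [gridPt_refine n i]
    refine le_maxRec (fun j => lineAt f (gridPt (n + 1) j)) _ (2 * i + 2 * 4 ^ n) ?_ y
    have h4 : (4:ℕ) ^ (n + 1) = 4 * 4 ^ n := pow_succ' 4 n
    omega
  have hmono : ∀ y, Monotone fun n => maxRec (fun i => lineAt f (gridPt n i)) (2 * 4 ^ n) y :=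
    fun y => monotone_nat_of_le_succ fun n => hstep n y
  have hle_f : ∀ n y, maxRec (fun i => lineAt f (gridPt n i)) (2 * 4 ^ n) y ≤ f y :=
    fun n => maxRec_le _ f _ (fun i _ y => lineAt_le hf _ y)
  -- approximation: supporting lines at grid points come arbitrarily close to `f y`
  have happrox : ∀ y : ℝ, ∀ ε : ℝ, 0 < ε →
      ∃ n i, i ≤ 2 * 4 ^ n ∧ f y - ε < lineAt f (gridPt n i) y := by
    intro y ε hε
    set M := f (y + 1) - f y with hM
    set m := f (y - 1) - f (y - 2) with hm
    set Mm := max (M - m) 0 with hMm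
    have hMm0 : 0 ≤ Mm := le_max_right _ _
    obtain ⟨n, hn⟩ := pow_unbounded_of_one_lt (max (Mm / ε) (|y| + 2)) (by norm_num : (1:ℝ) < 2)
    have h2pos : (0:ℝ) < 2 ^ n := by positivity
    have hy2 : |y| + 2 ≤ 2 ^ n := (le_max_right _ _).trans hn.le
    have hMme : Mm / 2 ^ n < ε := by
      rw [div_lt_iff₀ h2pos]
      have h1 : Mm / ε < 2 ^ n := (le_max_left _ _).trans_lt hn
      rw [div_lt_iff₀ hε] at h1
      nlinarith
    have h4eq : (4:ℝ) ^ n = 2 ^ n * 2 ^ n := by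
      rw [show (4:ℝ) = 2 * 2 by norm_num, mul_pow]
    set z : ℤ := ⌊y * 2 ^ n⌋ with hz
    have hz1 : (z:ℝ) ≤ y * 2 ^ n := Int.floor_le _
    have hz2 : y * 2 ^ n - 1 < z := Int.sub_one_lt_floor _
    have habsy : -|y| ≤ y := neg_abs_le y
    have habsy' : y ≤ |y| := le_abs_self y
    have hzlow : -(4:ℤ) ^ n ≤ z := by
      rw [hz]
      apply Int.le_floor.mpr
      push_cast
      nlinarith [mul_le_mul_of_nonneg_right (by linarith : |y| ≤ 2 ^ n - 2) h2pos.le,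
        mul_le_mul_of_nonneg_right habsy h2pos.le]
    have hzhigh : z ≤ 4 ^ n := by
      have hzr : (z:ℝ) ≤ (4:ℝ) ^ n := by
        nlinarith [mul_le_mul_of_nonneg_right (by linarith : |y| ≤ 2 ^ n - 2) h2pos.le,
          mul_le_mul_of_nonneg_right habsy' h2pos.le]
      exact_mod_cast hzr
    set i : ℕ := (z + 4 ^ n).toNat with hi
    have hinn : (0:ℤ) ≤ z + 4 ^ n := by linarith
    have hiZ : (i : ℤ) = z + 4 ^ n := Int.toNat_of_nonneg hinn
    have hile : i ≤ 2 * 4 ^ n := by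
      have h12 : (i:ℤ) ≤ 2 * 4 ^ n := by rw [hiZ]; linarith
      exact_mod_cast h12
    have hiR : (i : ℝ) = (z : ℝ) + 4 ^ n := by exact_mod_cast hiZ
    have hq : gridPt n i = (z : ℝ) / 2 ^ n := by
      unfold gridPt
      rw [hiR]
      ring
    set q := (z:ℝ) / 2 ^ n with hqdef
    have hqy : q ≤ y := by
      rw [hqdef, div_le_iff₀ h2pos]
      exact hz1
    have hyq : y - q < 1 / 2 ^ n := by
      have h5 : y < ((z:ℝ) + 1) / 2 ^ n := by rw [lt_div_iff₀ h2pos]; linarith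
      have h6 : ((z:ℝ) + 1) / 2 ^ n = q + 1 / 2 ^ n := by rw [hqdef]; ring
      linarith
    have h2n1 : (1:ℝ) / 2 ^ n ≤ 1 := by
      rw [div_le_one h2pos]
      calc (1:ℝ) = 1 ^ n := (one_pow n).symm
      _ ≤ 2 ^ n := by gcongr <;> norm_num
    refine ⟨n, i, hile, ?_⟩
    rcases eq_or_lt_of_le hqy with hqe | hql
    · rw [hq, hqe, lineAt_self]
      linarith
    · have hqy1 : y - 1 < q := by linarith
      have hq2 : y - 2 < q := by linarith
      have hMbound : f y - f q ≤ M * (y - q) := by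
        have h7 := slope3 hf hql (by linarith : y < y + 1)
        have h8 : (f (y + 1) - f y) / (y + 1 - y) = M := by rw [hM]; norm_num
        rw [h8, div_le_iff₀ (by linarith : (0:ℝ) < y - q)] at h7
        nlinarith [h7]
      have hmbound : m ≤ subgrad f q := by
        have h9 := slopeL hf (by linarith : y - 2 < y - 1) (by linarith : y - 1 < q)
        have h10 : (f (y - 1) - f (y - 2)) / (y - 1 - (y - 2)) = m := by rw [hm]; norm_num
        rw [h10] at h9
        exact h9.trans (slope_le_subgrad hf (by linarith : y - 2 < q))
      have hyq0 : 0 ≤ y - q := by linarith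
      have hprod : M * (y - q) - m * (y - q) ≤ Mm * (1 / 2 ^ n) := by
        have h11 : (M - m) * (y - q) ≤ Mm * (y - q) :=
          mul_le_mul_of_nonneg_right (le_max_left _ _) hyq0
        have h12 : Mm * (y - q) ≤ Mm * (1 / 2 ^ n) :=
          mul_le_mul_of_nonneg_left hyq.le hMm0
        nlinarith [h11, h12]
      have hsub : m * (y - q) ≤ subgrad f q * (y - q) :=
        mul_le_mul_of_nonneg_right hmbound hyq0
      rw [hq]
      show f y - ε < f q + subgrad f q * (y - q)
      have hMme' : Mm * (1 / 2 ^ n) < ε := by rw [mul_one_div]; exact hMme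
      have hfq : f y - M * (y - q) ≤ f q := by linarith [hMbound]
      nlinarith [hMbound, hsub, hprod, hMme', hfq]
  -- pointwise convergence
  have htend : ∀ y, Filter.Tendsto (fun n => maxRec (fun i => lineAt f (gridPt n i)) (2 * 4 ^ n) y)
      Filter.atTop (nhds (f y)) := by
    intro y
    apply tendsto_atTop_isLUB (hmono y)
    constructor
    · rintro _ ⟨n, rfl⟩
      exact hle_f n y
    · intro b hb
      by_contra hcon
      push_neg at hcon
      obtain ⟨n, i, hi, hlq⟩ := happrox y (f y - b) (by linarith)
      have h1 : lineAt f (gridPt n i) y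
          ≤ maxRec (fun j => lineAt f (gridPt n j)) (2 * 4 ^ n) y :=
          le_maxRec (fun j => lineAt f (gridPt n j)) _ i hi y
      have h2 := hb ⟨n, rfl⟩
      simp only at h2
      linarith
  -- conclude with monotone convergence
  have hTβ : Filter.Tendsto
      (fun n => ∫ y, maxRec (fun i => lineAt f (gridPt n i)) (2 * 4 ^ n) y ∂β)
      Filter.atTop (nhds (∫ y, f y ∂β)) :=
    integral_tendsto_of_tendsto_of_monotone (fun n => (main n (2 * 4 ^ n)).1) hfβ
      (Filter.Eventually.of_forall hmono) (Filter.Eventually.of_forall htend)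
  have hTβ' : Filter.Tendsto
      (fun n => ∫ y, maxRec (fun i => lineAt f (gridPt n i)) (2 * 4 ^ n) y ∂β')
      Filter.atTop (nhds (∫ y, f y ∂β')) :=
    integral_tendsto_of_tendsto_of_monotone (fun n => (main n (2 * 4 ^ n)).2.1) hfβ'
      (Filter.Eventually.of_forall hmono) (Filter.Eventually.of_forall htend)
  exact le_of_tendsto_of_tendsto' hTβ hTβ' fun n => (main n (2 * 4 ^ n)).2.2.1

end
end
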